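/- arXiv:1902.02852 — 10 statements merged into one kernel-verified Lean document; each statement's English description precedes it below -/
import Mathlib

section
/- Let p ∈ (0,1) and let X₁,…,Xₙ be independent, identically distributed geometric random variables with Pr[X = k] = p(1−p)^k for k = 0,1,2,…, and let μ = (1−p)/p be their common mean. Let X̄ₙ = (X₁+⋯+Xₙ)/n. Then for every λ > 1, Pr[X̄ₙ ≥ λμ] ≤ exp(−n·H(λ,μ)), where H(λ,μ) = μλ·ln λ − (1+μλ)·ln((1+μλ)/(1+μ)). -/
open MeasureTheory ProbabilityTheory Real Filter

theorem geometric_upper_tail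
    {Omega : Type*} [MeasurableSpace Omega] (P : Measure Omega) [IsProbabilityMeasure P]
    (p : ℝ) (hp : p ∈ Set.Ioo (0 : ℝ) 1) (n : ℕ)
    (X : Fin n → Omega → ℕ)
    (hmeas : ∀ i, Measurable (X i))
    (hindep : iIndepFun X P)
    (hdist : ∀ i k, P {omega | X i omega = k} = ENNReal.ofReal (p * (1 - p) ^ k))
    (mu : ℝ) (hmu : mu = (1 - p) / p)
    (lam : ℝ) (hlam : 1 < lam) :
    (P {omega | lam * mu ≤ (∑ i, (X i omega : ℝ)) / n}).toReal ≤
      Real.exp (-(n : ℝ) * (mu * lam * Real.log lam - (1 + mu * lam) * Real.log ((1 + mu * lam) / (1 + mu)))) := by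
  obtain ⟨hp0, hp1⟩ := hp
  rcases Nat.eq_zero_or_pos n with hn | hn
  · subst hn
    have h1 : (P {omega | lam * mu ≤ (∑ i : Fin 0, (X i omega : ℝ)) / (0 : ℕ)}).toReal ≤ 1 := by
      have := ENNReal.toReal_mono ENNReal.one_ne_top
        (prob_le_one (μ := P) (s := {omega | lam * mu ≤ (∑ i : Fin 0, (X i omega : ℝ)) / (0 : ℕ)}))
      simpa using this
    simpa using h1
  -- basic positivity facts
  have hmu0 : 0 < mu := by
    rw [hmu]; exact div_pos (by linarith) hp0
  have hlam0 : 0 < lam := by linarith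
  have hA0 : 0 < 1 + mu * lam := by nlinarith
  have hB0 : 0 < 1 + mu := by linarith
  have hpB : p * (1 + mu) = 1 := by
    rw [hmu]; field_simp
    ring
  -- the optimal exponent t
  set t := Real.log (lam * (1 + mu) / (1 + mu * lam)) with ht_def
  have hratio1 : 1 < lam * (1 + mu) / (1 + mu * lam) := by
    rw [lt_div_iff₀ hA0]; nlinarith
  have ht0 : 0 < t := Real.log_pos hratio1
  have het : Real.exp t = lam * (1 + mu) / (1 + mu * lam) := Real.exp_log (by linarith)
  -- r = (1-p) e^t
  set r := (1 - p) * Real.exp t with hr_def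
  have h1p : 1 - p = mu * p := by rw [hmu]; field_simp
  have hr_eq : r = mu * lam / (1 + mu * lam) := by
    rw [hr_def, het, h1p]
    field_simp
    linear_combination hpB
  have hr0 : 0 ≤ r := by
    rw [hr_eq]; positivity
  have hr1 : r < 1 := by
    rw [hr_eq, div_lt_one hA0]; nlinarith
  have h1r : 1 - r = 1 / (1 + mu * lam) := by
    rw [hr_eq]; field_simp
    ring
  -- real-valued versions
  set Y : Fin n → Omega → ℝ := fun i ω => ((X i ω : ℕ) : ℝ) with hY
  have hmeasY : ∀ i, Measurable (Y i) := fun i =>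
    measurable_from_top.comp (hmeas i)
  have hindepY : iIndepFun Y P :=
    hindep.comp (fun _ => (Nat.cast : ℕ → ℝ)) (fun _ => measurable_from_top)
  -- the law of each X i
  have hmap : ∀ i (k : ℕ), (P.map (X i)) {k} = ENNReal.ofReal (p * (1 - p) ^ k) := by
    intro i k
    rw [Measure.map_apply (hmeas i) (measurableSet_singleton k)]
    convert hdist i k using 2
    ext; simp
  -- the function on ℕ
  set g : ℕ → ℝ := fun k => Real.exp (t * k) with hg_def
  have hg_eq : ∀ k, g k = Real.exp t ^ k := by
    intro k; rw [hg_def]; simp only [mul_comm t (k : ℝ)]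
    exact Real.exp_nat_mul t k
  have hsum : Summable (fun k : ℕ => p * (1 - p) ^ k * g k) := by
    have : (fun k : ℕ => p * (1 - p) ^ k * g k) = fun k : ℕ => p * r ^ k := by
      funext k
      rw [hg_eq, hr_def, mul_pow, mul_assoc]
    rw [this]
    exact (summable_geometric_of_lt_one hr0 hr1).mul_left p
  have hnonneg : ∀ k : ℕ, 0 ≤ p * (1 - p) ^ k * g k := by
    intro k
    have : (0:ℝ) < g k := Real.exp_pos _
    have h1 : (0:ℝ) ≤ (1 - p) ^ k := pow_nonneg (by linarith) k
    positivity
  -- Integrability of g wrt the law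
  have hIntg : ∀ i, Integrable g (P.map (X i)) := by
    intro i
    refine ⟨Measurable.aestronglyMeasurable measurable_from_top, ?_⟩
    rw [HasFiniteIntegral]
    rw [MeasureTheory.lintegral_countable' (fun k => ‖g k‖ₑ)]
    have heq : ∀ k : ℕ, ‖g k‖ₑ * (P.map (X i)) {k}
        = ENNReal.ofReal (p * (1 - p) ^ k * g k) := by
      intro k
      have hg0 : (0:ℝ) ≤ g k := Real.exp_nonneg _
      rw [hmap i k, Real.enorm_eq_ofReal hg0, ← ENNReal.ofReal_mul hg0]
      congr 1
      ring
    simp_rw [heq]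
    rw [← ENNReal.ofReal_tsum_of_nonneg hnonneg hsum]
    exact ENNReal.ofReal_lt_top
  -- Integrability of exp (t * Y i)
  have hIntY : ∀ i, Integrable (fun ω => Real.exp (t * Y i ω)) P := by
    intro i
    have := (integrable_map_measure (μ := P) (f := X i) (g := g)
      (Measurable.aestronglyMeasurable measurable_from_top)
      (hmeas i).aemeasurable).mp (hIntg i)
    exact this
  -- value of the mgf
  have hmgf : ∀ i, mgf (Y i) P t = p * (1 + mu * lam) := by
    intro i
    have h0 : ∫ k, g k ∂(P.map (X i)) = ∫ ω, g (X i ω) ∂P :=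
      integral_map (hmeas i).aemeasurable
        (Measurable.aestronglyMeasurable measurable_from_top)
    have h1 : mgf (Y i) P t = ∫ k, g k ∂(P.map (X i)) := by
      rw [mgf]
      exact h0.symm
    rw [h1, MeasureTheory.integral_countable' (hIntg i)]
    have heq : ∀ k : ℕ, (P.map (X i)).real {k} • g k = p * r ^ k := by
      intro k
      have h1 : (0:ℝ) ≤ (1 - p) ^ k := pow_nonneg (by linarith) k
      rw [measureReal_def, hmap i k, smul_eq_mul, ENNReal.toReal_ofReal (by positivity), hg_eq, hr_def,
        mul_pow, mul_assoc]
    simp_rw [heq]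
    rw [tsum_mul_left, tsum_geometric_of_lt_one hr0 hr1, h1r]
    rw [one_div, inv_inv]
  -- Chernoff bound
  set S : Omega → ℝ := ∑ i, Y i with hS
  have hIntS : Integrable (fun ω => Real.exp (t * S ω)) P :=
    hindepY.integrable_exp_mul_sum hmeasY (fun i _ => hIntY i)
  have hchern := measure_ge_le_exp_mul_mgf (μ := P) (X := S) (t := t)
    ((n : ℝ) * (lam * mu)) ht0.le hIntS
  have hmgfS : mgf S P t = (p * (1 + mu * lam)) ^ n := by
    rw [hS, hindepY.mgf_sum hmeasY]
    simp [hmgf]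
  -- identify the events
  have hset : {omega | lam * mu ≤ (∑ i, (X i omega : ℝ)) / n}
      = {ω | (n : ℝ) * (lam * mu) ≤ S ω} := by
    ext ω
    simp only [Set.mem_setOf_eq, hS, Finset.sum_apply]
    have hn0 : (0:ℝ) < n := by exact_mod_cast hn
    rw [le_div_iff₀ hn0]
    constructor
    · intro h; linarith [h]
    · intro h; nlinarith [h]
  rw [hset]
  refine hchern.trans ?_
  rw [hmgfS]
  -- final computation
  have hpA0 : 0 < p * (1 + mu * lam) := by positivity
  have hpow : (p * (1 + mu * lam)) ^ n = Real.exp ((n : ℝ) * Real.log (p * (1 + mu * lam))) := by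
    rw [Real.exp_nat_mul, Real.exp_log hpA0]
  rw [hpow, ← Real.exp_add]
  apply le_of_eq
  congr 1
  have hlogpA : Real.log (p * (1 + mu * lam)) = Real.log ((1 + mu * lam) / (1 + mu)) := by
    congr 1
    field_simp
    nlinarith [hpB]
  have hlogt : t = Real.log lam - Real.log ((1 + mu * lam) / (1 + mu)) := by
    rw [ht_def]
    rw [show lam * (1 + mu) / (1 + mu * lam) = lam / ((1 + mu * lam) / (1 + mu)) by
      field_simp]
    rw [Real.log_div (by linarith) (by positivity)]
  rw [hlogpA, hlogt]
  ring
end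

section
/- Let p ∈ (0,1) and let X₁,…,Xₙ be independent, identically distributed geometric random variables with Pr[X = k] = p(1−p)^k for k = 0,1,2,…, and let μ = (1−p)/p be their common mean. Let X̄ₙ = (X₁+⋯+Xₙ)/n. Then for every λ ∈ (0,1), Pr[X̄ₙ ≤ λμ] ≤ exp(−n·H(λ,μ)), where H(λ,μ) = μλ·ln λ − (1+μλ)·ln((1+μλ)/(1+μ)). -/
open MeasureTheory ProbabilityTheory Real Filter

set_option maxHeartbeats 600000 in
theorem geometric_lower_tail
    {Omega : Type*} [MeasurableSpace Omega] (P : Measure Omega) [IsProbabilityMeasure P]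
    (p : ℝ) (hp : p ∈ Set.Ioo (0 : ℝ) 1) (n : ℕ)
    (X : Fin n → Omega → ℕ)
    (hmeas : ∀ i, Measurable (X i))
    (hindep : iIndepFun X P)
    (hdist : ∀ i k, P {omega | X i omega = k} = ENNReal.ofReal (p * (1 - p) ^ k))
    (mu : ℝ) (hmu : mu = (1 - p) / p)
    (lam : ℝ) (hlam : lam ∈ Set.Ioo (0 : ℝ) 1) :
    (P {omega | (∑ i, (X i omega : ℝ)) / n ≤ lam * mu}).toReal ≤
      Real.exp (-(n : ℝ) * (mu * lam * Real.log lam - (1 + mu * lam) * Real.log ((1 + mu * lam) / (1 + mu)))) := by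
  obtain ⟨hp0, hp1⟩ := hp
  obtain ⟨hl0, hl1⟩ := hlam
  have hmu0 : 0 < mu := by rw [hmu]; exact div_pos (by linarith) hp0
  set q : ℝ := p + lam * (1 - p) with hq
  have hq0 : 0 < q := by nlinarith
  have hlq : lam < q := by nlinarith
  have hq1 : q < 1 := by nlinarith
  set s : ℝ := lam / q with hs
  have hs0 : 0 < s := div_pos hl0 hq0
  have hs1 : s < 1 := (div_lt_one hq0).2 hlq
  set t : ℝ := Real.log s with ht
  have ht0 : t < 0 := Real.log_neg hs0 hs1
  have hexp : ∀ k : ℕ, Real.exp (t * (k : ℝ)) = s ^ k := fun k => by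
    rw [mul_comm, Real.exp_nat_mul, Real.exp_log hs0]
  -- real-valued versions
  set Y : Fin n → Omega → ℝ := fun i ω => (X i ω : ℝ) with hY
  have hYmeas : ∀ i, Measurable (Y i) := fun i =>
    (measurable_from_top : Measurable ((↑) : ℕ → ℝ)).comp (hmeas i)
  have hindepY : iIndepFun Y P :=
    hindep.comp (fun _ => ((↑) : ℕ → ℝ)) (fun _ => measurable_from_top)
  -- integrability
  have hintY : ∀ i, Integrable (fun ω => Real.exp (t * Y i ω)) P := by
    intro i
    refine Integrable.mono' (integrable_const 1)
      (((hYmeas i).const_mul t).exp.aestronglyMeasurable) ?_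
    filter_upwards with ω
    rw [Real.norm_eq_abs, abs_of_nonneg (Real.exp_pos _).le, Real.exp_le_one_iff]
    exact mul_nonpos_of_nonpos_of_nonneg ht0.le (Nat.cast_nonneg _)
  -- mgf of each
  have hmgfY : ∀ i, mgf (Y i) P t = q := by
    intro i
    have hfm : Measurable fun k : ℕ => s ^ k := measurable_from_top
    have h1 : mgf (Y i) P t = ∫ ω, s ^ (X i ω) ∂P := by
      unfold mgf
      exact integral_congr_ae (ae_of_all _ fun ω => hexp (X i ω))
    rw [h1, ← integral_map (hmeas i).aemeasurable hfm.aestronglyMeasurable]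
    have hint2 : Integrable (fun k : ℕ => s ^ k) (P.map (X i)) := by
      rw [integrable_map_measure hfm.aestronglyMeasurable (hmeas i).aemeasurable]
      have := hintY i
      refine this.congr (ae_of_all _ fun ω => ?_)
      exact (hexp (X i ω))
    rw [integral_countable' hint2]
    have hsingle : ∀ k : ℕ, ((P.map (X i)) {k}).toReal = p * (1 - p) ^ k := by
      intro k
      rw [Measure.map_apply (hmeas i) (measurableSet_singleton k)]
      have : X i ⁻¹' {k} = {ω | X i ω = k} := rfl
      rw [this, hdist i k, ENNReal.toReal_ofReal (mul_nonneg hp0.le (pow_nonneg (by linarith) k))]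
    have hr0 : (0:ℝ) ≤ (1 - p) * s := mul_nonneg (by linarith) hs0.le
    have hr1 : (1 - p) * s < 1 := by nlinarith
    calc ∑' k : ℕ, ((P.map (X i)) {k}).toReal • s ^ k
        = ∑' k : ℕ, p * ((1 - p) * s) ^ k := by
          refine tsum_congr fun k => ?_
          rw [hsingle k, smul_eq_mul, mul_pow]; ring
      _ = p * (1 - (1 - p) * s)⁻¹ := by
          rw [tsum_mul_left, tsum_geometric_of_lt_one hr0 hr1]
      _ = q := by
          have : 1 - (1 - p) * s = p / q := by
            rw [hs]; field_simp; ring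
          rw [this]
          field_simp
  -- the event
  have hset : {ω : Omega | (∑ i, (X i ω : ℝ)) / n ≤ lam * mu}
      = {ω : Omega | ∑ i, Y i ω ≤ (n : ℝ) * (lam * mu)} := by
    ext ω
    simp only [Set.mem_setOf_eq, hY]
    rcases Nat.eq_zero_or_pos n with h0 | hn
    · subst h0
      simp [le_of_lt (by positivity : (0:ℝ) < lam * mu)]
    · rw [div_le_iff₀ (by positivity : (0:ℝ) < (n:ℝ))]
      rw [mul_comm ((n:ℝ)) (lam * mu)]
  rw [hset]
  set S : Omega → ℝ := fun ω => ∑ i, Y i ω with hSdef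
  have hSeq : (∑ i, Y i) = S := by
    funext ω; rw [Finset.sum_apply]
  -- integrability of sum exp
  have hintS : Integrable (fun ω => Real.exp (t * S ω)) P := by
    refine Integrable.mono' (integrable_const 1)
      ((((Finset.measurable_sum Finset.univ fun i _ => hYmeas i)).const_mul t).exp.aestronglyMeasurable) ?_
    filter_upwards with ω
    rw [Real.norm_eq_abs, abs_of_nonneg (Real.exp_pos _).le, Real.exp_le_one_iff]
    exact mul_nonpos_of_nonpos_of_nonneg ht0.le
      (Finset.sum_nonneg fun i _ => Nat.cast_nonneg _)
  have hchernoff := measure_le_le_exp_mul_mgf ((n : ℝ) * (lam * mu)) ht0.le hintS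
  refine hchernoff.trans_eq ?_
  rw [← hSeq, hindepY.mgf_sum hYmeas Finset.univ]
  simp only [hmgfY, Finset.prod_const, Finset.card_univ, Fintype.card_fin]
  -- final algebra
  have hiq : (1 + mu * lam) / (1 + mu) = q := by
    rw [hmu, hq]; field_simp; ring
  have hlogs : Real.log s = Real.log lam - Real.log q :=
    Real.log_div hl0.ne' hq0.ne'
  rw [hiq]
  rw [show q ^ n = Real.exp ((n : ℝ) * Real.log q) by
    rw [Real.exp_nat_mul, Real.exp_log hq0]]
  rw [← Real.exp_add]
  congr 1
  rw [ht, hlogs]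
  ring
end

section
/- For every μ > 0 and every λ ∈ (0,1], the inequality H(λ,μ) ≥ (μ/(2(1+μ)))·(λ−1)² holds, where H(λ,μ) = μλ·ln λ − (1+μλ)·ln((1+μλ)/(1+μ)) and H(0,μ) is interpreted as the limit of H(λ,μ) as λ → 0⁺. -/
open MeasureTheory ProbabilityTheory Real Filter

theorem H_approx_one (mu : ℝ) (hmu : 0 < mu) (lam : ℝ) (hlam : lam ∈ Set.Ioc (0 : ℝ) 1) :
    mu / (2 * (1 + mu)) * (lam - 1) ^ 2 ≤ (mu * lam * Real.log lam - (1 + mu * lam) * Real.log ((1 + mu * lam) / (1 + mu))) := by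
  obtain ⟨hl0, hl1⟩ := hlam
  have h1mu : (0:ℝ) < 1 + mu := by linarith
  set c := mu / (2 * (1 + mu)) with hc
  set F : ℝ → ℝ := fun x => mu * x * Real.log x - (1 + mu * x) * Real.log ((1 + mu * x) / (1 + mu)) - c * (x - 1) ^ 2 with hF
  set G : ℝ → ℝ := fun x => mu * Real.log x - mu * Real.log ((1 + mu * x) / (1 + mu)) - 2 * c * (x - 1) with hG
  have hpos : ∀ x : ℝ, 0 < x → 0 < 1 + mu * x := fun x hx => by nlinarith
  -- derivative of F is G
  have hFd : ∀ x : ℝ, 0 < x → HasDerivAt F (G x) x := by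
    intro x hx
    have hux : 0 < 1 + mu * x := hpos x hx
    have h1 : HasDerivAt (fun y : ℝ => mu * y * Real.log y) (mu * Real.log x + mu) x := by
      have := (((hasDerivAt_id x).const_mul mu).mul (Real.hasDerivAt_log hx.ne'))
      exact this.congr_deriv (by simp [hx.ne'])
    have h2 : HasDerivAt (fun y : ℝ => (1 + mu * y) * Real.log ((1 + mu * y) / (1 + mu)))
        (mu * Real.log ((1 + mu * x) / (1 + mu)) + mu) x := by
      have hu : HasDerivAt (fun y : ℝ => 1 + mu * y) mu x := by
        simpa using ((hasDerivAt_id x).const_mul mu).const_add 1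
      have hlog : HasDerivAt (fun y : ℝ => Real.log (1 + mu * y) - Real.log (1 + mu))
          (mu / (1 + mu * x)) x := by
        have := (Real.hasDerivAt_log hux.ne').comp x hu
        simpa [div_eq_mul_inv, mul_comm] using this.sub_const (Real.log (1 + mu))
      have hmul := hu.mul hlog
      have heq : (fun y : ℝ => (1 + mu * y) * (Real.log (1 + mu * y) - Real.log (1 + mu))) =ᶠ[nhds x]
          (fun y : ℝ => (1 + mu * y) * Real.log ((1 + mu * y) / (1 + mu))) := by
        have hopen : IsOpen {y : ℝ | 0 < 1 + mu * y} := isOpen_lt continuous_const (by continuity)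
        filter_upwards [hopen.mem_nhds hux] with y hy
        rw [Real.log_div hy.ne' h1mu.ne']
      have := hmul.congr_of_eventuallyEq heq.symm
      refine this.congr_deriv ?_
      rw [Real.log_div hux.ne' h1mu.ne']
      field_simp
    have h3 : HasDerivAt (fun y : ℝ => c * (y - 1) ^ 2) (2 * c * (x - 1)) x := by
      have := (((hasDerivAt_id x).sub_const 1).pow 2).const_mul c
      refine this.congr_deriv ?_
      simp [id]
      ring
    exact ((h1.sub h2).sub h3).congr_deriv (by simp only [hG]; ring)
  -- derivative of G
  have hGd : ∀ x : ℝ, 0 < x → HasDerivAt G (mu / x - mu * (mu / (1 + mu * x)) - 2 * c) x := by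
    intro x hx
    have hux : 0 < 1 + mu * x := hpos x hx
    have h1 : HasDerivAt (fun y : ℝ => mu * Real.log y) (mu / x) x := by
      simpa [div_eq_mul_inv, mul_comm] using (Real.hasDerivAt_log hx.ne').const_mul mu
    have hu : HasDerivAt (fun y : ℝ => 1 + mu * y) mu x := by
      simpa using ((hasDerivAt_id x).const_mul mu).const_add 1
    have hlog : HasDerivAt (fun y : ℝ => Real.log (1 + mu * y) - Real.log (1 + mu))
        (mu / (1 + mu * x)) x := by
      have := (Real.hasDerivAt_log hux.ne').comp x hu
      simpa [div_eq_mul_inv, mul_comm] using this.sub_const (Real.log (1 + mu))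
    have h2 : HasDerivAt (fun y : ℝ => mu * Real.log ((1 + mu * y) / (1 + mu)))
        (mu * (mu / (1 + mu * x))) x := by
      have heq : (fun y : ℝ => mu * (Real.log (1 + mu * y) - Real.log (1 + mu))) =ᶠ[nhds x]
          (fun y : ℝ => mu * Real.log ((1 + mu * y) / (1 + mu))) := by
        have hopen : IsOpen {y : ℝ | 0 < 1 + mu * y} := isOpen_lt continuous_const (by continuity)
        filter_upwards [hopen.mem_nhds hux] with y hy
        rw [Real.log_div hy.ne' h1mu.ne']
      exact (hlog.const_mul mu).congr_of_eventuallyEq heq.symm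
    have h3 : HasDerivAt (fun y : ℝ => 2 * c * (y - 1)) (2 * c) x := by
      simpa using ((hasDerivAt_id x).sub_const 1).const_mul (2 * c)
    exact (h1.sub h2).sub h3
  -- G is monotone on Icc lam 1
  have hsub : Set.Icc lam 1 ⊆ Set.Ioi (0:ℝ) := fun x hx => lt_of_lt_of_le hl0 hx.1
  have hGmono : MonotoneOn G (Set.Icc lam 1) := by
    apply monotoneOn_of_deriv_nonneg (convex_Icc lam 1)
    · exact fun x hx => ((hGd x (hsub hx)).continuousAt).continuousWithinAt
    · intro x hx
      rw [interior_Icc] at hx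
      exact ((hGd x (lt_trans hl0 hx.1)).differentiableAt).differentiableWithinAt
    · intro x hx
      rw [interior_Icc] at hx
      have hx0 : 0 < x := lt_trans hl0 hx.1
      have hux : 0 < 1 + mu * x := hpos x hx0
      rw [(hGd x hx0).deriv]
      have hx1 : x ≤ 1 := le_of_lt hx.2
      have key : mu / x - mu * (mu / (1 + mu * x)) = mu / (x * (1 + mu * x)) := by
        field_simp
        ring
      rw [key]
      have hd : x * (1 + mu * x) ≤ 1 + mu := by nlinarith
      have h2c : 2 * (mu / (2 * (1 + mu))) = mu / (1 + mu) := by field_simp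
      rw [h2c]
      have : mu / (1 + mu) ≤ mu / (x * (1 + mu * x)) := by
        apply div_le_div_of_nonneg_left hmu.le (by positivity) hd
      linarith
  -- G ≤ 0 on Icc lam 1
  have hG1 : G 1 = 0 := by
    simp [hG, div_self h1mu.ne']
  have hGnonpos : ∀ x ∈ Set.Icc lam 1, G x ≤ 0 := by
    intro x hx
    have := hGmono hx (Set.mem_Icc.mpr ⟨hx.1.trans hx.2, le_refl 1⟩) hx.2
    rw [hG1] at this; exact this
  -- F is antitone on Icc lam 1
  have hFanti : AntitoneOn F (Set.Icc lam 1) := by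
    apply antitoneOn_of_deriv_nonpos (convex_Icc lam 1)
    · exact fun x hx => ((hFd x (hsub hx)).continuousAt).continuousWithinAt
    · intro x hx
      rw [interior_Icc] at hx
      exact ((hFd x (lt_trans hl0 hx.1)).differentiableAt).differentiableWithinAt
    · intro x hx
      rw [interior_Icc] at hx
      rw [(hFd x (lt_trans hl0 hx.1)).deriv]
      exact hGnonpos x ⟨hx.1.le, hx.2.le⟩
  have hF1 : F 1 = 0 := by
    simp [hF, div_self h1mu.ne']
  have := hFanti (Set.mem_Icc.mpr ⟨le_refl lam, hl1⟩) (Set.mem_Icc.mpr ⟨hl1, le_refl 1⟩) hl1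
  rw [hF1] at this
  simp only [hF] at this
  linarith
end

section
/- For every μ > 0 and every λ ∈ [1,2], the inequality H(λ,μ) ≥ (μ/(4(1+μ)))·(λ−1)² holds, where H(λ,μ) = μλ·ln λ − (1+μλ)·ln((1+μλ)/(1+μ)). -/
open MeasureTheory ProbabilityTheory Real Filter

theorem H_approx_two (mu : ℝ) (hmu : 0 < mu) (lam : ℝ) (hlam : lam ∈ Set.Icc (1 : ℝ) 2) :
    mu / (4 * (1 + mu)) * (lam - 1) ^ 2 ≤ (mu * lam * Real.log lam - (1 + mu * lam) * Real.log ((1 + mu * lam) / (1 + mu))) := by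
  obtain ⟨h1, h2⟩ := hlam
  have hmu1 : (0:ℝ) < 1 + mu := by linarith
  set c : ℝ := mu / (4 * (1 + mu)) with hc
  set f : ℝ → ℝ := fun l => mu * l * Real.log l
      - (1 + mu * l) * (Real.log (1 + mu * l) - Real.log (1 + mu)) - c * (l - 1) ^ 2 with hf
  -- derivative of f at every x > 0
  have hderiv : ∀ x : ℝ, 0 < x → HasDerivAt f
      (mu * (Real.log x - (Real.log (1 + mu * x) - Real.log (1 + mu))) - 2 * c * (x - 1)) x := by
    intro x hx
    have hpx : (0:ℝ) < 1 + mu * x := by nlinarith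
    have h1' : HasDerivAt (fun l : ℝ => mu * l) mu x := by
      simpa using (hasDerivAt_id x).const_mul mu
    have hA : HasDerivAt (fun l : ℝ => mu * l * Real.log l)
        (mu * Real.log x + (mu * x) * x⁻¹) x :=
      h1'.mul (Real.hasDerivAt_log hx.ne')
    have hB : HasDerivAt (fun l : ℝ => 1 + mu * l) mu x := by
      simpa using h1'.const_add 1
    have hB2 : HasDerivAt (fun l : ℝ => Real.log (1 + mu * l) - Real.log (1 + mu))
        (mu / (1 + mu * x)) x := (hB.log hpx.ne').sub_const _
    have hBfull : HasDerivAt (fun l : ℝ => (1 + mu * l) * (Real.log (1 + mu * l) - Real.log (1 + mu)))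
        (mu * (Real.log (1 + mu * x) - Real.log (1 + mu)) + (1 + mu * x) * (mu / (1 + mu * x))) x :=
      hB.mul hB2
    have hC : HasDerivAt (fun l : ℝ => c * (l - 1) ^ 2) (c * ((2:ℕ) * (x - 1) ^ 1 * 1)) x :=
      (((hasDerivAt_id x).sub_const 1).pow 2).const_mul c
    have hD := (hA.sub hBfull).sub hC
    convert hD using 1
    · rfl
    · rfl
    · rfl
    rw [mul_inv_cancel_right₀ hx.ne', show (1 + mu * x) * (mu / (1 + mu * x)) = mu by rw [mul_comm (1 + mu * x)]; exact div_mul_cancel₀ mu hpx.ne']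
    push_cast
    ring
  have key : f 1 ≤ f lam := by
    have hmono : MonotoneOn f (Set.Icc 1 2) := by
      apply monotoneOn_of_deriv_nonneg (convex_Icc 1 2)
      · intro x hx
        exact ((hderiv x (by linarith [hx.1])).continuousAt).continuousWithinAt
      · intro x hx
        rw [interior_Icc] at hx
        exact ((hderiv x (by linarith [hx.1])).differentiableAt).differentiableWithinAt
      · intro x hx
        rw [interior_Icc] at hx
        obtain ⟨hx1, hx2⟩ := hx
        have hx0 : (0:ℝ) < x := by linarith
        have hpx : (0:ℝ) < 1 + mu * x := by nlinarith
        rw [(hderiv x hx0).deriv]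
        -- key log lower bound
        have ht : (0:ℝ) < (1 + mu * x) / (x * (1 + mu)) := by positivity
        have hlog := Real.log_le_sub_one_of_pos ht
        have hsplit : Real.log ((1 + mu * x) / (x * (1 + mu)))
            = Real.log (1 + mu * x) - (Real.log x + Real.log (1 + mu)) := by
          rw [Real.log_div hpx.ne' (by positivity), Real.log_mul hx0.ne' hmu1.ne']
        rw [hsplit] at hlog
        have hfrac : (1 + mu * x) / (x * (1 + mu)) - 1 = -((x - 1) / (x * (1 + mu))) := by
          field_simp
          ring
        rw [hfrac] at hlog
        -- so L ≥ (x-1)/(x(1+mu))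
        have hL : (x - 1) / (x * (1 + mu))
            ≤ Real.log x - (Real.log (1 + mu * x) - Real.log (1 + mu)) := by linarith
        have hcomp : (x - 1) / (2 * (1 + mu)) ≤ (x - 1) / (x * (1 + mu)) := by
          apply div_le_div_of_nonneg_left (by linarith) (by positivity) (by nlinarith)
        have h6 : mu * ((x - 1) / (2 * (1 + mu)))
            ≤ mu * (Real.log x - (Real.log (1 + mu * x) - Real.log (1 + mu))) := by
          apply mul_le_mul_of_nonneg_left (by linarith) hmu.le
        have h7 : 2 * c * (x - 1) = mu * ((x - 1) / (2 * (1 + mu))) := by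
          rw [hc]; field_simp; ring
        linarith
    exact hmono (Set.mem_Icc.mpr ⟨le_refl 1, by norm_num⟩) (Set.mem_Icc.mpr ⟨h1, h2⟩) h1
  have hf1 : f 1 = 0 := by
    simp [hf]
  have hpos : (0:ℝ) < 1 + mu * lam := by nlinarith
  have hdivlog : Real.log ((1 + mu * lam) / (1 + mu))
      = Real.log (1 + mu * lam) - Real.log (1 + mu) :=
    Real.log_div hpos.ne' hmu1.ne'
  rw [hdivlog]
  have : f lam = mu * lam * Real.log lam
      - (1 + mu * lam) * (Real.log (1 + mu * lam) - Real.log (1 + mu)) - c * (lam - 1) ^ 2 := rfl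
  linarith [key, hf1]
end

section
/- For every μ > 0 and every λ ≥ 2, the inequality H(λ,μ) ≥ (μ/(4(1+μ)))·(λ−1) holds, where H(λ,μ) = μλ·ln λ − (1+μλ)·ln((1+μλ)/(1+μ)). -/
open MeasureTheory ProbabilityTheory Real Filter

private lemma H_key_aux (mu : ℝ) (hmu : 0 < mu) (lam : ℝ) (hlam : 1 ≤ lam) :
    mu / (1 + mu) * (lam - 1 - Real.log lam) ≤
      mu * lam * Real.log lam
        - (1 + mu * lam) * (Real.log (1 + mu * lam) - Real.log (1 + mu)) := by
  have hmu1 : (0:ℝ) < 1 + mu := by linarith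
  set g : ℝ → ℝ := fun x =>
    mu * x * Real.log x - (1 + mu * x) * (Real.log (1 + mu * x) - Real.log (1 + mu))
      - mu / (1 + mu) * (x - 1 - Real.log x) with hgdef
  have hd : ∀ x ∈ Set.Ici (1:ℝ), HasDerivAt g
      (mu * Real.log x + mu - (mu * (Real.log (1 + mu * x) - Real.log (1 + mu)) + mu)
        - mu / (1 + mu) * (1 - x⁻¹)) x := by
    intro x hx
    simp only [Set.mem_Ici] at hx
    have hx0 : (0:ℝ) < x := lt_of_lt_of_le one_pos hx
    have hmx : (0:ℝ) < 1 + mu * x := by nlinarith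
    have h1 : HasDerivAt (fun y : ℝ => mu * y * Real.log y) (mu * Real.log x + mu) x := by
      have h := (Real.hasDerivAt_mul_log hx0.ne').const_mul mu
      simpa [mul_assoc, mul_add] using h
    have hlin : HasDerivAt (fun y : ℝ => 1 + mu * y) mu x := by
      simpa using ((hasDerivAt_id x).const_mul mu).const_add 1
    have hlog : HasDerivAt (fun y : ℝ => Real.log (1 + mu * y)) (mu / (1 + mu * x)) x := by
      simpa [div_eq_mul_inv, mul_comm] using hlin.log hmx.ne'
    have h2 : HasDerivAt (fun y : ℝ => (1 + mu * y) * (Real.log (1 + mu * y) - Real.log (1 + mu)))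
        (mu * (Real.log (1 + mu * x) - Real.log (1 + mu)) + mu) x := by
      have h := hlin.mul (hlog.sub_const (Real.log (1 + mu)))
      rw [mul_comm (1 + mu * x), div_mul_cancel₀ mu hmx.ne'] at h
      exact h
    have h3 : HasDerivAt (fun y : ℝ => mu / (1 + mu) * (y - 1 - Real.log y))
        (mu / (1 + mu) * (1 - x⁻¹)) x := by
      exact (((hasDerivAt_id x).sub_const 1).sub (Real.hasDerivAt_log hx0.ne')).const_mul _
    exact (h1.sub h2).sub h3
  have hderiv_nonneg : ∀ x ∈ interior (Set.Ici (1:ℝ)), 0 ≤ deriv g x := by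
    intro x hx
    rw [interior_Ici] at hx
    have hx1 : (1:ℝ) < x := hx
    have hx0 : (0:ℝ) < x := by linarith
    have hmx : (0:ℝ) < 1 + mu * x := by nlinarith
    rw [(hd x (le_of_lt hx1)).deriv]
    -- key: log ((1+mu*x)/(x*(1+mu))) ≤ (1+mu*x)/(x*(1+mu)) - 1
    have hz : (0:ℝ) < (1 + mu * x) / (x * (1 + mu)) := by positivity
    have hlog_le := Real.log_le_sub_one_of_pos hz
    have hlogeq : Real.log ((1 + mu * x) / (x * (1 + mu)))
        = Real.log (1 + mu * x) - (Real.log x + Real.log (1 + mu)) := by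
      rw [Real.log_div hmx.ne' (by positivity), Real.log_mul hx0.ne' hmu1.ne']
    rw [hlogeq] at hlog_le
    have halg : mu * ((1 + mu * x) / (x * (1 + mu)) - 1) = - (mu / (1 + mu) * (1 - x⁻¹)) := by
      field_simp
      ring
    nlinarith [mul_le_mul_of_nonneg_left hlog_le (le_of_lt hmu)]
  have hcont : ContinuousOn g (Set.Ici 1) := fun x hx => (hd x hx).continuousAt.continuousWithinAt
  have hdiff : DifferentiableOn ℝ g (interior (Set.Ici 1)) := by
    intro x hx
    rw [interior_Ici] at hx
    exact ((hd x (Set.mem_Ici.mpr (le_of_lt (Set.mem_Ioi.mp hx)))).differentiableAt).differentiableWithinAt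
  have hmono : MonotoneOn g (Set.Ici 1) :=
    monotoneOn_of_deriv_nonneg (convex_Ici 1) hcont hdiff hderiv_nonneg
  have h01 : g 1 ≤ g lam := hmono (Set.mem_Ici.mpr le_rfl) (Set.mem_Ici.mpr hlam) hlam
  have hg1 : g 1 = 0 := by
    simp [hgdef]
  rw [hg1] at h01
  simp only [hgdef] at h01
  linarith

theorem H_approx_three (mu : ℝ) (hmu : 0 < mu) (lam : ℝ) (hlam : 2 ≤ lam) :
    mu / (4 * (1 + mu)) * (lam - 1) ≤ (mu * lam * Real.log lam - (1 + mu * lam) * Real.log ((1 + mu * lam) / (1 + mu))) := by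
  have hmu1 : (0:ℝ) < 1 + mu := by linarith
  have hlam0 : (0:ℝ) < lam := by linarith
  have hmx : (0:ℝ) < 1 + mu * lam := by nlinarith
  have hkey := H_key_aux mu hmu lam (by linarith)
  rw [Real.log_div hmx.ne' hmu1.ne']
  -- log lam ≤ 3/4 * (lam - 1)
  have h2 : Real.log (lam / 2) ≤ lam / 2 - 1 := Real.log_le_sub_one_of_pos (by linarith)
  have hsplit : Real.log (lam / 2) = Real.log lam - Real.log 2 :=
    Real.log_div hlam0.ne' two_ne_zero
  have hl2 : Real.log 2 < 0.6931471808 := Real.log_two_lt_d9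
  have hloglam : Real.log lam ≤ 3 / 4 * (lam - 1) := by
    rw [hsplit] at h2
    linarith
  have hstep : mu / (4 * (1 + mu)) * (lam - 1) ≤ mu / (1 + mu) * (lam - 1 - Real.log lam) := by
    rw [div_mul_eq_mul_div, div_mul_eq_mul_div, div_le_div_iff₀ (by positivity) hmu1]
    nlinarith [mul_le_mul_of_nonneg_left hloglam (le_of_lt hmu)]
  linarith
end

section
/- For every μ with 0 < μ ≤ 1/3 and every λ ≥ 3, the inequality H(λ,μ) ≥ (μλ/4)·ln(min{λ, 1/μ}) holds, where H(λ,μ) = μλ·ln λ − (1+μλ)·ln((1+μλ)/(1+μ)). -/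
open MeasureTheory ProbabilityTheory Real Filter
set_option maxHeartbeats 1600000

lemma my_log_ub_pow (a r : ℝ) (n : ℕ) (ha : 0 < a) (hn : 0 < (n:ℝ)) (hr : 0 ≤ r)
    (h : a ≤ (1 + r/n)^n) : Real.log a ≤ r := by
  have h1 : (0:ℝ) < 1 + r/n := by positivity
  have h2 : Real.log a ≤ Real.log ((1 + r/(n:ℝ))^n) := Real.log_le_log ha h
  rw [Real.log_pow] at h2
  have h3 : Real.log (1 + r/(n:ℝ)) ≤ r/n := by
    have := Real.log_le_sub_one_of_pos h1; linarith
  have h4 : (n:ℝ) * Real.log (1 + r/(n:ℝ)) ≤ (n:ℝ) * (r/n) :=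
    mul_le_mul_of_nonneg_left h3 (by positivity)
  have h5 : (n:ℝ) * (r/n) = r := by field_simp
  linarith

lemma my_log_lb_pow (a r : ℝ) (n : ℕ) (hn : 0 < (n:ℝ)) (hu : r/n < 1) (hr : 0 ≤ r)
    (h : 1 ≤ a * (1 - r/n)^n) : r ≤ Real.log a := by
  have hb : (0:ℝ) < 1 - r/n := by linarith
  have hp : (0:ℝ) < (1 - r/(n:ℝ))^n := pow_pos hb n
  have ha : 0 < a := by nlinarith
  have h2 : Real.log 1 ≤ Real.log (a * (1 - r/(n:ℝ))^n) := Real.log_le_log one_pos h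
  rw [Real.log_one, Real.log_mul ha.ne' hp.ne', Real.log_pow] at h2
  have h3 : Real.log (1 - r/(n:ℝ)) ≤ -(r/n) := by
    have := Real.log_le_sub_one_of_pos hb; linarith
  have h4 : (n:ℝ) * Real.log (1 - r/(n:ℝ)) ≤ (n:ℝ) * (-(r/n)) :=
    mul_le_mul_of_nonneg_left h3 (by positivity)
  have h5 : (n:ℝ) * (-(r/n)) = -r := by field_simp
  linarith

lemma my_log_le_half {s : ℝ} (hs : 1 ≤ s) : Real.log s ≤ (s - 1/s)/2 := by
  set y := Real.log s with hy
  have hy0 : 0 ≤ y := Real.log_nonneg hs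
  have hs0 : (0:ℝ) < s := by linarith
  have hexp : Real.exp y = s := Real.exp_log hs0
  have hq : 1 + y + y^2/2 ≤ s := by
    rw [← hexp]; exact Real.quadratic_le_exp_of_nonneg hy0
  have hP : (0:ℝ) < 1 + y + y^2/2 := by positivity
  have hinv : 1/s ≤ 1/(1 + y + y^2/2) := by
    apply one_div_le_one_div_of_le hP hq
  have h1 : (1 + y + y^2/2) * (1/(1 + y + y^2/2)) = 1 := by field_simp
  have key : 2*y ≤ (1 + y + y^2/2) - 1/(1 + y + y^2/2) := by
    nlinarith [sq_nonneg (y^2), sq_nonneg y, hP, h1]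
  linarith

lemma my_log_anchor {a t : ℝ} (ha : 0 < a) (h : a ≤ t) :
    Real.log t ≤ Real.log a + (t^2 - a^2)/(2*a*t) := by
  have ht : 0 < t := lt_of_lt_of_le ha h
  have hs : 1 ≤ t/a := (one_le_div ha).2 h
  have h1 := my_log_le_half hs
  rw [Real.log_div ht.ne' ha.ne'] at h1
  have h2 : (t/a - 1/(t/a))/2 = (t^2 - a^2)/(2*a*t) := by
    field_simp
  rw [h2] at h1
  linarith

lemma my_h32lb : (0.404:ℝ) ≤ Real.log (3/2) :=
  my_log_lb_pow (3/2) 0.404 64 (by norm_num) (by norm_num) (by norm_num) (by norm_num)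
lemma my_h32ub : Real.log ((3:ℝ)/2) ≤ 0.407 :=
  my_log_ub_pow (3/2) 0.407 64 (by norm_num) (by norm_num) (by norm_num) (by norm_num)
lemma my_h43lb : (0.2868:ℝ) ≤ Real.log (4/3) :=
  my_log_lb_pow (4/3) 0.2868 64 (by norm_num) (by norm_num) (by norm_num) (by norm_num)
lemma my_hAub : Real.log ((19:ℝ)/13) ≤ 0.3825 :=
  my_log_ub_pow (19/13) 0.3825 32 (by norm_num) (by norm_num) (by norm_num) (by norm_num)
lemma my_log3_eq : Real.log 3 = Real.log 2 + Real.log ((3:ℝ)/2) := by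
  have h := (Real.log_mul (by norm_num : (2:ℝ) ≠ 0) (by norm_num : (3:ℝ)/2 ≠ 0)).symm
  rw [show (2:ℝ)*(3/2) = 3 by norm_num] at h
  exact h.symm
lemma my_L3lb : (1.0971471803:ℝ) ≤ Real.log 3 := by
  rw [my_log3_eq]; linarith [Real.log_two_gt_d9, my_h32lb]
lemma my_L3ub : Real.log 3 ≤ (1.1001471808:ℝ) := by
  rw [my_log3_eq]; linarith [Real.log_two_lt_d9, my_h32ub]

theorem H_approx_four (mu : ℝ) (hmu : 0 < mu) (hmu' : mu ≤ 1 / 3)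
    (lam : ℝ) (hlam : 3 ≤ lam) :
    mu * lam / 4 * Real.log (min lam (1 / mu)) ≤ (mu * lam * Real.log lam - (1 + mu * lam) * Real.log ((1 + mu * lam) / (1 + mu))) := by
  have hlam0 : (0:ℝ) < lam := by linarith
  set x := mu * lam with hxdef
  have hx0 : 0 < x := mul_pos hmu hlam0
  have h1x0 : (0:ℝ) < 1 + x := by linarith
  have hlx0 : (0:ℝ) < lam + x := by linarith
  have hx3 : 3 * x ≤ lam := by
    have h := mul_le_mul_of_nonneg_right hmu' hlam0.le
    rw [hxdef]; linarith
  have hmu1 : (0:ℝ) < 1 + mu := by linarith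
  have hlogratio : Real.log ((1+x)/(1+mu)) = Real.log (1+x) + Real.log lam - Real.log (lam+x) := by
    have he : (1+x)/(1+mu) = (1+x)*lam/(lam+x) := by
      rw [hxdef]; field_simp
    rw [he, Real.log_div (by positivity) hlx0.ne', Real.log_mul h1x0.ne' hlam0.ne']
  rcases le_total x 1 with hx1 | hx1
  · -- Case B : x ≤ 1, min = lam
    have hmin : min lam (1/mu) = lam := by
      apply min_eq_left
      rw [le_div_iff₀ hmu]
      calc lam * mu = x := by rw [hxdef]; ring
        _ ≤ 1 := hx1
    rw [hmin, hlogratio]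
    have f1 : (lam - 3)/lam ≤ Real.log lam - Real.log 3 := by
      have h := Real.log_le_sub_one_of_pos (show (0:ℝ) < 3/lam by positivity)
      rw [Real.log_div (by norm_num) hlam0.ne'] at h
      have e : (3:ℝ)/lam - 1 = -((lam - 3)/lam) := by field_simp; ring
      linarith [e, h]
    have f2 : Real.log lam + Real.log (3+x) - Real.log 3 - Real.log (lam+x) ≤ x*(lam-3)/(3*(lam+x)) := by
      have h := Real.log_le_sub_one_of_pos (show (0:ℝ) < lam*(3+x)/(3*(lam+x)) by positivity)
      have hdec : Real.log (lam*(3+x)/(3*(lam+x))) = Real.log lam + Real.log (3+x) - (Real.log 3 + Real.log (lam+x)) := by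
        rw [Real.log_div (by positivity) (by positivity), Real.log_mul hlam0.ne' (by positivity),
          Real.log_mul (by norm_num) hlx0.ne']
      have e : lam*(3+x)/(3*(lam+x)) - 1 = x*(lam-3)/(3*(lam+x)) := by
        field_simp; ring
      rw [hdec] at h
      linarith [e, h]
    have hs1 : (1:ℝ) ≤ 3*(1+x)/(3+x) := by
      rw [le_div_iff₀ (by positivity)]; linarith
    have hdecs : Real.log (3*(1+x)/(3+x)) = Real.log 3 + Real.log (1+x) - Real.log (3+x) := by
      rw [Real.log_div (by positivity) (by positivity), Real.log_mul (by norm_num) h1x0.ne']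
    have B2 : (1+x) * (Real.log 3 + Real.log (1+x) - Real.log (3+x)) ≤ 3*x/4 * Real.log 3 := by
      rcases le_total x (9/10) with hx9 | hx9
      · have hb := my_log_le_half hs1
        rw [hdecs] at hb
        have heq : (3*(1+x)/(3+x) - 1/(3*(1+x)/(3+x)))/2 = 2*x*(3+2*x)/(3*(3+x)*(1+x)) := by
          field_simp; ring
        rw [heq] at hb
        have hb2 := mul_le_mul_of_nonneg_left hb h1x0.le
        have heq2 : (1+x)*(2*x*(3+2*x)/(3*(3+x)*(1+x))) = 2*x*(3+2*x)/(3*(3+x)) := by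
          field_simp
        rw [heq2] at hb2
        have hnum : 2*x*(3+2*x)/(3*(3+x)) ≤ 3*x/4 * 1.0971471803 := by
          rw [div_le_iff₀ (by positivity)]
          nlinarith [mul_nonneg hx0.le (by linarith : (0:ℝ) ≤ 9/10 - x), hx0.le]
        have hc : 3*x/4 * 1.0971471803 ≤ 3*x/4 * Real.log 3 :=
          mul_le_mul_of_nonneg_left my_L3lb (by positivity)
        linarith
      · have ha_s : (19:ℝ)/13 ≤ 3*(1+x)/(3+x) := by
          rw [div_le_div_iff₀ (by norm_num) (by positivity)]; linarith
        have hb := my_log_anchor (show (0:ℝ) < 19/13 by norm_num) ha_s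
        rw [hdecs] at hb
        have heq : ((3*(1+x)/(3+x))^2 - ((19:ℝ)/13)^2)/(2*(19/13)*(3*(1+x)/(3+x)))
            = (1521*(1+x)^2 - 361*(3+x)^2)/(1482*(1+x)*(3+x)) := by
          field_simp; ring
        rw [heq] at hb
        have hb' : Real.log 3 + Real.log (1+x) - Real.log (3+x)
            ≤ 0.3825 + (1521*(1+x)^2 - 361*(3+x)^2)/(1482*(1+x)*(3+x)) := by
          linarith [my_hAub]
        have hb2 := mul_le_mul_of_nonneg_left hb' h1x0.le
        have heq2 : (1+x)*(0.3825 + (1521*(1+x)^2 - 361*(3+x)^2)/(1482*(1+x)*(3+x)))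
            = 0.3825*(1+x) + (1521*(1+x)^2 - 361*(3+x)^2)/(1482*(3+x)) := by
          field_simp
        rw [heq2] at hb2
        have hd : (1521*(1+x)^2 - 361*(3+x)^2)/(1482*(3+x)) ≤ 3*x/4 * 1.0971471803 - 0.3825*(1+x) := by
          rw [div_le_iff₀ (by positivity)]
          nlinarith [mul_nonneg (by linarith : (0:ℝ) ≤ x - 9/10) (by linarith : (0:ℝ) ≤ 1 - x)]
        have hc : 3*x/4 * 1.0971471803 ≤ 3*x/4 * Real.log 3 :=
          mul_le_mul_of_nonneg_left my_L3lb (by positivity)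
        linarith
    have m1 : 3*x/4*((lam-3)/lam) ≤ 3*x/4*(Real.log lam - Real.log 3) :=
      mul_le_mul_of_nonneg_left f1 (by positivity)
    have m2 : (1+x)*(Real.log lam + Real.log (3+x) - Real.log 3 - Real.log (lam+x))
        ≤ (1+x)*(x*(lam-3)/(3*(lam+x))) :=
      mul_le_mul_of_nonneg_left f2 h1x0.le
    have e1 : 3*x/4*((lam-3)/lam) - (1+x)*(x*(lam-3)/(3*(lam+x)))
        = x*(lam-3)*(9*(lam+x) - 4*(1+x)*lam)/(12*lam*(lam+x)) := by
      field_simp; ring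
    have e2 : 0 ≤ x*(lam-3)*(9*(lam+x) - 4*(1+x)*lam)/(12*lam*(lam+x)) := by
      apply div_nonneg _ (by positivity)
      apply mul_nonneg (mul_nonneg hx0.le (by linarith))
      nlinarith [mul_nonneg (by linarith : (0:ℝ) ≤ 1 - x) hlam0.le]
    linarith [B2, m1, m2, e1, e2]
  · -- Case A : 1 ≤ x, min = 1/mu
    have hmin : min lam (1/mu) = 1/mu := by
      apply min_eq_right
      rw [div_le_iff₀ hmu]
      calc (1:ℝ) ≤ x := hx1
        _ = lam * mu := by rw [hxdef]; ring
    have hinv : (1:ℝ)/mu = lam/x := by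
      rw [hxdef]; field_simp
    rw [hmin, hinv, hlogratio, Real.log_div hlam0.ne' hx0.ne']
    have f1 : (lam - 3*x)/lam ≤ Real.log lam - Real.log 3 - Real.log x := by
      have h := Real.log_le_sub_one_of_pos (show (0:ℝ) < 3*x/lam by positivity)
      rw [Real.log_div (by positivity) hlam0.ne', Real.log_mul (by norm_num) hx0.ne'] at h
      have e : (3:ℝ)*x/lam - 1 = -((lam - 3*x)/lam) := by field_simp; ring
      linarith [e, h]
    have f2 : Real.log lam + Real.log (4/3) - Real.log (lam+x) ≤ (lam-3*x)/(3*(lam+x)) := by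
      have h := Real.log_le_sub_one_of_pos (show (0:ℝ) < 4*lam/(3*(lam+x)) by positivity)
      have hdec : Real.log (4*lam/(3*(lam+x))) = Real.log (4/3) + Real.log lam - Real.log (lam+x) := by
        rw [show (4:ℝ)*lam/(3*(lam+x)) = (4/3)*lam/(lam+x) by field_simp,
          Real.log_div (by positivity) hlx0.ne', Real.log_mul (by norm_num) hlam0.ne']
      have e : 4*lam/(3*(lam+x)) - 1 = (lam-3*x)/(3*(lam+x)) := by field_simp; ring
      rw [hdec] at h
      linarith [e, h]
    have A2 : (1+x)*Real.log (1+x) ≤ 3*x/4*Real.log 3 + x*Real.log x + (1+x)*Real.log (4/3) := by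
      rcases le_total x 2 with hx2 | hx2
      · have g1 := my_log_anchor (show (0:ℝ) < 2 by norm_num) (show (2:ℝ) ≤ 1+x by linarith)
        have g1' : ((1+x)^2 - (2:ℝ)^2)/(2*2*(1+x)) ≤ (x-1)*(x+3)/8 := by
          rw [div_le_div_iff₀ (by positivity) (by norm_num)]
          nlinarith [sq_nonneg (x-1), hx1]
        have h2 := Real.log_le_sub_one_of_pos (show (0:ℝ) < (1+x)/(2*x) by positivity)
        have hdec2 : Real.log ((1+x)/(2*x)) = Real.log (1+x) - (Real.log 2 + Real.log x) := by
          rw [Real.log_div h1x0.ne' (by positivity), Real.log_mul (by norm_num) hx0.ne']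
        have e2' : (1+x)/(2*x) - 1 = (1-x)/(2*x) := by field_simp; ring
        rw [hdec2] at h2
        have hx_mul : x*(Real.log (1+x) - (Real.log 2 + Real.log x)) ≤ x*((1-x)/(2*x)) :=
          mul_le_mul_of_nonneg_left (by linarith [h2, e2']) hx0.le
        have e3 : x*((1-x)/(2*x)) = (1-x)/2 := by field_simp
        have c1 : (1+x)*Real.log 2 ≤ (1+x)*0.6931471808 :=
          mul_le_mul_of_nonneg_left (le_of_lt Real.log_two_lt_d9) h1x0.le
        have c2 : 3*x/4*1.0971471803 ≤ 3*x/4*Real.log 3 :=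
          mul_le_mul_of_nonneg_left my_L3lb (by positivity)
        have c3 : (1+x)*0.2868 ≤ (1+x)*Real.log (4/3) :=
          mul_le_mul_of_nonneg_left my_h43lb h1x0.le
        have hnum : (1+x)*0.6931471808 + (x-1)*(x+3)/8 + (1-x)/2
            ≤ 3*x/4*1.0971471803 + (1+x)*0.2868 := by
          nlinarith [mul_nonneg (by linarith : (0:ℝ) ≤ x-1) (by linarith : (0:ℝ) ≤ 2-x)]
        linarith [g1, g1', hx_mul, e3, hnum, c1, c2, c3]
      · have g1 : Real.log (1+x) ≤ Real.log 3 + (x-2)/3 := by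
          have h := Real.log_le_sub_one_of_pos (show (0:ℝ) < (1+x)/3 by positivity)
          rw [Real.log_div h1x0.ne' (by norm_num)] at h
          have e : (1+x)/3 - 1 = (x-2)/(3:ℝ) := by ring
          linarith [e, h]
        have h2 := Real.log_le_sub_one_of_pos (show (0:ℝ) < (1+x)/x by positivity)
        rw [Real.log_div h1x0.ne' hx0.ne'] at h2
        have e : (1+x)/x - 1 = 1/x := by field_simp; ring
        have hx_mul : x*(Real.log (1+x) - Real.log x) ≤ x*(1/x) :=
          mul_le_mul_of_nonneg_left (by linarith [h2, e]) hx0.le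
        have e3 : x*((1:ℝ)/x) = 1 := by field_simp
        have c2 : 3*x/4*1.0971471803 ≤ 3*x/4*Real.log 3 :=
          mul_le_mul_of_nonneg_left my_L3lb (by positivity)
        have c3 : (1+x)*0.2868 ≤ (1+x)*Real.log (4/3) :=
          mul_le_mul_of_nonneg_left my_h43lb h1x0.le
        have hnum : 1.1001471808 + (x-2)/3 + 1 ≤ 3*x/4*1.0971471803 + (1+x)*0.2868 := by
          linarith
        linarith [g1, my_L3ub, hx_mul, e3, c2, c3, hnum]
    have m1 : 3*x/4*((lam-3*x)/lam) ≤ 3*x/4*(Real.log lam - Real.log 3 - Real.log x) :=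
      mul_le_mul_of_nonneg_left f1 (by positivity)
    have m2 : (1+x)*(Real.log lam + Real.log (4/3) - Real.log (lam+x))
        ≤ (1+x)*((lam-3*x)/(3*(lam+x))) :=
      mul_le_mul_of_nonneg_left f2 h1x0.le
    have e1 : 3*x/4*((lam-3*x)/lam) - (1+x)*((lam-3*x)/(3*(lam+x)))
        = (lam-3*x)*(9*x*(lam+x) - 4*(1+x)*lam)/(12*lam*(lam+x)) := by
      field_simp; ring
    have e2 : 0 ≤ (lam-3*x)*(9*x*(lam+x) - 4*(1+x)*lam)/(12*lam*(lam+x)) := by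
      apply div_nonneg _ (by positivity)
      apply mul_nonneg (by linarith)
      nlinarith [mul_nonneg (by linarith : (0:ℝ) ≤ x-1) hlam0.le, hx0.le, sq_nonneg x]
    linarith [A2, m1, m2, e1, e2]
end

section
/- For every λ with 0 < λ ≤ 1/3 and every μ ≥ 3, the inequality H(λ,μ) ≥ (1/4)·ln(min{1/λ, μ}) holds, where H(λ,μ) = μλ·ln λ − (1+μλ)·ln((1+μλ)/(1+μ)). -/
open MeasureTheory ProbabilityTheory Real Filter

private lemma poly_ineq {m : ℝ} (hm : 3 ≤ m) : 256 * m ^ 5 ≤ (1 + m) ^ 8 := by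
  nlinarith [sq_nonneg (m - 3), sq_nonneg ((m - 3) ^ 2), sq_nonneg ((m - 3) * m),
    sq_nonneg ((m - 3) ^ 2 * m), sq_nonneg ((m - 3) ^ 3), sq_nonneg m,
    sq_nonneg ((m - 3) ^ 3 * m), sq_nonneg ((m - 3) ^ 4)]

private lemma boundary {m : ℝ} (hm : 3 ≤ m) :
    5 / 4 * Real.log m ≤ 2 * (Real.log (1 + m) - Real.log 2) := by
  have hm0 : (0:ℝ) < m := by linarith
  have h1m : (0:ℝ) < 1 + m := by linarith
  have key : Real.log (m ^ 5) ≤ Real.log ((1 + m) ^ 8 / 2 ^ 8) := by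
    apply Real.log_le_log (by positivity)
    rw [le_div_iff₀ (by positivity)]
    nlinarith [poly_ineq hm]
  rw [Real.log_pow, Real.log_div (by positivity) (by positivity), Real.log_pow,
    Real.log_pow] at key
  push_cast at key
  linarith

private lemma H_deriv_t (mu t : ℝ) (hmu : 0 < mu) (ht : 0 < t) :
    HasDerivAt (fun t : ℝ => mu * t * Real.log t
        - (1 + mu * t) * (Real.log (1 + mu * t) - Real.log (1 + mu)))
      (mu * (Real.log t + Real.log (1 + mu) - Real.log (1 + mu * t))) t := by
  have h1 : (0:ℝ) < 1 + mu * t := by positivity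
  have hlog : HasDerivAt Real.log t⁻¹ t := Real.hasDerivAt_log (ne_of_gt ht)
  have ha : HasDerivAt (fun t : ℝ => mu * t * Real.log t) (mu * Real.log t + mu) t := by
    have h := (((hasDerivAt_id t).const_mul mu).mul hlog)
    refine h.congr_deriv ?_
    field_simp
    simp only [id]
    ring
  have hin : HasDerivAt (fun t : ℝ => 1 + mu * t) mu t := by
    simpa using ((hasDerivAt_id t).const_mul mu).const_add 1
  have hl : HasDerivAt (fun t : ℝ => Real.log (1 + mu * t) - Real.log (1 + mu))
      (mu / (1 + mu * t)) t := by
    have := (hin.log (ne_of_gt h1)).sub_const (Real.log (1 + mu))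
    simpa using this
  have hb : HasDerivAt (fun t : ℝ =>
      (1 + mu * t) * (Real.log (1 + mu * t) - Real.log (1 + mu)))
      (mu * (Real.log (1 + mu * t) - Real.log (1 + mu)) + mu) t := by
    have h := hin.mul hl
    refine h.congr_deriv ?_
    field_simp
  have h := ha.sub hb
  refine h.congr_deriv ?_
  ring

private lemma H_anti (mu : ℝ) (hmu : 0 < mu) :
    AntitoneOn (fun t : ℝ => mu * t * Real.log t
        - (1 + mu * t) * (Real.log (1 + mu * t) - Real.log (1 + mu))) (Set.Ioc 0 1) := by
  have hint : interior (Set.Ioc (0:ℝ) 1) = Set.Ioo 0 1 := interior_Ioc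
  apply antitoneOn_of_deriv_nonpos (convex_Ioc 0 1)
  · intro x hx
    exact (H_deriv_t mu x hmu hx.1).continuousAt.continuousWithinAt
  · rw [hint]
    intro x hx
    exact (H_deriv_t mu x hmu hx.1).differentiableAt.differentiableWithinAt
  · rw [hint]
    intro x hx
    rw [(H_deriv_t mu x hmu hx.1).deriv]
    have hx0 : (0:ℝ) < x := hx.1
    have hx1 : x ≤ 1 := le_of_lt hx.2
    have hlog : Real.log x + Real.log (1 + mu) ≤ Real.log (1 + mu * x) := by
      rw [← Real.log_mul (ne_of_gt hx0) (by positivity)]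
      apply Real.log_le_log (by positivity)
      nlinarith
    have : Real.log x + Real.log (1 + mu) - Real.log (1 + mu * x) ≤ 0 := by linarith
    exact mul_nonpos_of_nonneg_of_nonpos (le_of_lt hmu) this

private lemma G_deriv (lam s : ℝ) (hlam : 0 < lam) (hs : 0 < s) :
    HasDerivAt (fun s : ℝ => s * lam * Real.log lam
        - (1 + s * lam) * (Real.log (1 + s * lam) - Real.log (1 + s)))
      (lam * Real.log lam - lam * (Real.log (1 + s * lam) - Real.log (1 + s))
        - lam + (1 + s * lam) / (1 + s)) s := by
  have h1 : (0:ℝ) < 1 + s * lam := by positivity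
  have h2 : (0:ℝ) < 1 + s := by positivity
  have ha : HasDerivAt (fun s : ℝ => s * lam * Real.log lam) (lam * Real.log lam) s := by
    simpa [mul_assoc] using (hasDerivAt_id s).mul_const (lam * Real.log lam)
  have hin : HasDerivAt (fun s : ℝ => 1 + s * lam) lam s := by
    simpa using ((hasDerivAt_id s).mul_const lam).const_add 1
  have hin2 : HasDerivAt (fun s : ℝ => 1 + s) 1 s := by
    simpa using (hasDerivAt_id s).const_add 1
  have hl : HasDerivAt (fun s : ℝ => Real.log (1 + s * lam) - Real.log (1 + s))
      (lam / (1 + s * lam) - 1 / (1 + s)) s := by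
    have := (hin.log (ne_of_gt h1)).sub (hin2.log (ne_of_gt h2))
    exact this
  have hb : HasDerivAt (fun s : ℝ =>
      (1 + s * lam) * (Real.log (1 + s * lam) - Real.log (1 + s)))
      (lam * (Real.log (1 + s * lam) - Real.log (1 + s))
        + ((1 + s * lam) * (lam / (1 + s * lam) - 1 / (1 + s)))) s := hin.mul hl
  have h := ha.sub hb
  refine h.congr_deriv ?_
  field_simp
  ring

private lemma G_mono (lam c : ℝ) (hlam : 0 < lam) (hc : 0 < c) :
    MonotoneOn (fun s : ℝ => s * lam * Real.log lam
        - (1 + s * lam) * (Real.log (1 + s * lam) - Real.log (1 + s))) (Set.Ici c) := by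
  have hint : interior (Set.Ici c) = Set.Ioi c := interior_Ici
  apply monotoneOn_of_deriv_nonneg (convex_Ici c)
  · intro x hx
    have hx0 : 0 < x := lt_of_lt_of_le hc hx
    exact (G_deriv lam x hlam hx0).continuousAt.continuousWithinAt
  · rw [hint]
    intro x hx
    have hx0 : 0 < x := lt_trans hc hx
    exact (G_deriv lam x hlam hx0).differentiableAt.differentiableWithinAt
  · rw [hint]
    intro x hx
    have hx0 : 0 < x := lt_trans hc hx
    rw [(G_deriv lam x hlam hx0).deriv]
    have h1 : (0:ℝ) < 1 + x * lam := by positivity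
    have h2 : (0:ℝ) < 1 + x := by positivity
    set r : ℝ := (1 + x * lam) / (1 + x) with hr
    have hr0 : 0 < r := by positivity
    have hkey : Real.log (r / lam) ≤ r / lam - 1 :=
      Real.log_le_sub_one_of_pos (by positivity)
    rw [Real.log_div (ne_of_gt hr0) (ne_of_gt hlam), hr,
      Real.log_div (ne_of_gt h1) (ne_of_gt h2)] at hkey
    have hmul : lam * (Real.log (1 + x * lam) - Real.log (1 + x) - Real.log lam)
        ≤ lam * (r / lam - 1) := by
      apply mul_le_mul_of_nonneg_left _ (le_of_lt hlam)
      linarith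
    have hrl : lam * (r / lam - 1) = r - lam := by field_simp
    rw [hrl] at hmul
    have : r = (1 + x * lam) / (1 + x) := hr
    nlinarith [hmul]

theorem H_approx_five (lam : ℝ) (hlam : 0 < lam) (hlam' : lam ≤ 1 / 3)
    (mu : ℝ) (hmu : 3 ≤ mu) :
    1 / 4 * Real.log (min (1 / lam) mu) ≤ (mu * lam * Real.log lam - (1 + mu * lam) * Real.log ((1 + mu * lam) / (1 + mu))) := by
  have hmu0 : (0:ℝ) < mu := by linarith
  have h1mu : (0:ℝ) < 1 + mu := by linarith
  have h1ml : (0:ℝ) < 1 + mu * lam := by positivity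
  have hE : mu * lam * Real.log lam - (1 + mu * lam) * Real.log ((1 + mu * lam) / (1 + mu))
      = mu * lam * Real.log lam
        - (1 + mu * lam) * (Real.log (1 + mu * lam) - Real.log (1 + mu)) := by
    rw [Real.log_div (ne_of_gt h1ml) (ne_of_gt h1mu)]
  rw [hE]
  rcases le_total (mu * lam) 1 with hcase | hcase
  · -- Case A : mu * lam ≤ 1, min = mu
    have hmin : min (1 / lam) mu = mu := by
      apply min_eq_right
      rw [le_div_iff₀ hlam]
      linarith
    rw [hmin]
    have hmem1 : lam ∈ Set.Ioc (0:ℝ) 1 := ⟨hlam, by linarith⟩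
    have hinv0 : (0:ℝ) < 1 / mu := by positivity
    have hmem2 : 1 / mu ∈ Set.Ioc (0:ℝ) 1 := ⟨hinv0, by rw [div_le_one hmu0]; linarith⟩
    have hle : lam ≤ 1 / mu := by rw [le_div_iff₀ hmu0]; linarith
    have hmono := H_anti mu hmu0 hmem1 hmem2 hle
    have hval : mu * (1 / mu) * Real.log (1 / mu)
        - (1 + mu * (1 / mu)) * (Real.log (1 + mu * (1 / mu)) - Real.log (1 + mu))
        = -Real.log mu - 2 * (Real.log 2 - Real.log (1 + mu)) := by
      have hmm : mu * (1 / mu) = 1 := by field_simp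
      rw [hmm, Real.log_div one_ne_zero (ne_of_gt hmu0), Real.log_one]
      norm_num
    simp only at hmono
    rw [hval] at hmono
    have hb := boundary hmu
    linarith
  · -- Case B : 1 ≤ mu * lam, min = 1/lam
    have hmin : min (1 / lam) mu = 1 / lam := by
      apply min_eq_left
      rw [div_le_iff₀ hlam]
      linarith [mul_comm mu lam]
    rw [hmin]
    set m : ℝ := 1 / lam with hm
    have hm0 : (0:ℝ) < m := by positivity
    have hm3 : 3 ≤ m := by rw [hm, le_div_iff₀ hlam]; linarith
    have hmmu : m ≤ mu := by rw [hm, div_le_iff₀ hlam]; linarith [mul_comm mu lam]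
    have hmemc : m ∈ Set.Ici m := Set.self_mem_Ici
    have hmemmu : mu ∈ Set.Ici m := hmmu
    have hmono := G_mono lam m hlam hm0 hmemc hmemmu hmmu
    simp only at hmono
    have hml : m * lam = 1 := by rw [hm]; field_simp
    have hval : m * lam * Real.log lam
        - (1 + m * lam) * (Real.log (1 + m * lam) - Real.log (1 + m))
        = -Real.log m - 2 * (Real.log 2 - Real.log (1 + m)) := by
      rw [hml, hm, Real.log_div one_ne_zero (ne_of_gt hlam), Real.log_one]
      norm_num
    rw [hval] at hmono
    have hb := boundary hm3
    have hlogm : Real.log (1 / lam) = Real.log m := by rw [hm]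
    rw [hlogm]
    linarith
end

section
/- Let p ∈ (0,1), μ = (1−p)/p, and let X₁,…,Xₙ be independent, identically distributed geometric random variables with Pr[X = k] = p(1−p)^k for k = 0,1,2,…; let X̄ₙ = (X₁+⋯+Xₙ)/n. Then for every λ > 1 and every integer n ≥ 1, Pr[X̄ₙ ≥ λμ] ≥ exp(−n·[H(λ,μ) + ln(2πn)/(2n) + Δ_U(λ,μ)/n]), where H(λ,μ) = μλ·ln λ − (1+μλ)·ln((1+μλ)/(1+μ)) and Δ_U(λ,μ) = 7/6 + ln(λ + 2/μ). -/
open MeasureTheory ProbabilityTheory Real Filter Nat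
open scoped ENNReal
set_option linter.unusedSectionVars false

lemma sqrt_pi_le_stirlingSeq {j : ℕ} (hj : 1 ≤ j) : √π ≤ Stirling.stirlingSeq j := by
  obtain ⟨k, rfl⟩ := Nat.exists_eq_add_of_le' hj
  exact Stirling.stirlingSeq'_antitone.le_of_tendsto
    (Stirling.tendsto_stirlingSeq_sqrt_pi.comp (tendsto_add_atTop_nat 1)) k

lemma stirlingSeq_le {j : ℕ} (hj : 1 ≤ j) : Stirling.stirlingSeq j ≤ exp 1 / √2 := by
  obtain ⟨k, rfl⟩ := Nat.exists_eq_add_of_le' hj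
  have := Stirling.stirlingSeq'_antitone (Nat.zero_le k)
  simpa [Stirling.stirlingSeq_one] using this

lemma fact_lower {j : ℕ} (hj : 1 ≤ j) :
    √(2*π*j) * ((j:ℝ)/exp 1)^j ≤ (j ! : ℝ) := by
  have h := sqrt_pi_le_stirlingSeq hj
  rw [Stirling.stirlingSeq] at h
  have hj' : (0:ℝ) < (j:ℝ) := by exact_mod_cast hj
  have hpos : (0:ℝ) < √(2*(j:ℝ)) * ((j:ℝ)/exp 1)^j := by positivity
  rw [le_div_iff₀ hpos] at h
  calc √(2*π*j) * ((j:ℝ)/exp 1)^j = (√π * √(2*(j:ℝ))) * ((j:ℝ)/exp 1)^j := by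
        rw [← Real.sqrt_mul (by positivity)]; ring_nf
      _ ≤ (j ! : ℝ) := by nlinarith [h]

lemma exp_le_sqrt_two_pi : exp 1 ≤ √(2*π) * exp (1/12) := by
  have h12 : (0:ℝ) ≤ √(2*π) * exp (1/12) := by positivity
  have key : (exp 1)^12 ≤ (√(2*π) * exp (1/12))^12 := by
    have h1 : (√(2*π))^12 = (2*π)^6 := by
      rw [show (12:ℕ) = 2*6 from rfl, pow_mul, Real.sq_sqrt (by positivity)]
    have h2 : (exp (1/12))^12 = exp 1 := by
      rw [← Real.exp_nat_mul]; norm_num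
    rw [mul_pow, h1, h2]
    have he : (exp 1)^11 ≤ (2*π)^6 := by
      have hlt : exp 1 ≤ 2.7182818286 := (Real.exp_one_lt_d9).le
      have hpi : (6.283184:ℝ) ≤ 2*π := by
        have := Real.pi_gt_d6; linarith
      calc (exp 1)^11 ≤ (2.7182818286:ℝ)^11 :=
            pow_le_pow_left₀ (Real.exp_pos 1).le hlt 11
        _ ≤ (6.283184:ℝ)^6 := by norm_num
        _ ≤ (2*π)^6 := pow_le_pow_left₀ (by norm_num) hpi 6
    calc (exp 1)^12 = (exp 1)^11 * exp 1 := by ring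
      _ ≤ (2*π)^6 * exp 1 := by nlinarith [Real.exp_pos 1]
  exact le_of_pow_le_pow_left₀ (by norm_num) h12 key

lemma fact_upper {j : ℕ} (hj : 1 ≤ j) :
    (j ! : ℝ) ≤ √(2*π*j) * ((j:ℝ)/exp 1)^j * exp (1/12) := by
  have h := stirlingSeq_le hj
  rw [Stirling.stirlingSeq] at h
  have hj' : (0:ℝ) < (j:ℝ) := by exact_mod_cast hj
  have hpos : (0:ℝ) < √(2*(j:ℝ)) * ((j:ℝ)/exp 1)^j := by positivity
  rw [div_le_iff₀ hpos] at h
  have key : exp 1 / √2 * (√(2*(j:ℝ)) * ((j:ℝ)/exp 1)^j)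
      ≤ √(2*π*j) * ((j:ℝ)/exp 1)^j * exp (1/12) := by
    have h2 : √(2*(j:ℝ)) = √2 * √(j:ℝ) := Real.sqrt_mul (by norm_num) _
    have h3 : √(2*π*(j:ℝ)) = √(2*π) * √(j:ℝ) := Real.sqrt_mul (by positivity) _
    have h4 : exp 1 / √2 * (√2 * √(j:ℝ)) = exp 1 * √(j:ℝ) := by
      field_simp
    rw [h2, ← mul_assoc, h4, h3]
    have hpow : (0:ℝ) ≤ ((j:ℝ)/exp 1)^j := by positivity
    have hsj : (0:ℝ) ≤ √(j:ℝ) := Real.sqrt_nonneg _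
    calc exp 1 * √(j:ℝ) * ((j:ℝ)/exp 1)^j
        ≤ (√(2*π) * exp (1/12)) * √(j:ℝ) * ((j:ℝ)/exp 1)^j := by
          exact mul_le_mul_of_nonneg_right
            (mul_le_mul_of_nonneg_right exp_le_sqrt_two_pi hsj) hpow
      _ = √(2*π) * √(j:ℝ) * ((j:ℝ)/exp 1)^j * exp (1/12) := by ring
  linarith

lemma S1 {x y : ℝ} (hx : 0 < x) (hxy : x ≤ y) :
    (y - x) * (1 + log x) ≤ y * log y - x * log x := by
  have hy : 0 < y := lt_of_lt_of_le hx hxy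
  have h1 : log (x/y) ≤ x/y - 1 := Real.log_le_sub_one_of_pos (by positivity)
  rw [Real.log_div hx.ne' hy.ne'] at h1
  have h2 : y * (log x - log y) ≤ x - y := by
    have := mul_le_mul_of_nonneg_left h1 hy.le
    calc y * (log x - log y) ≤ y * (x/y - 1) := by nlinarith
      _ = x - y := by field_simp
  nlinarith

lemma S2 {x y : ℝ} (hx : 0 < x) (hxy : x ≤ y) :
    y * log y - x * log x ≤ (y - x) * (1 + log y) := by
  have hy : 0 < y := lt_of_lt_of_le hx hxy
  have h1 : log (y/x) ≤ y/x - 1 := Real.log_le_sub_one_of_pos (by positivity)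
  rw [Real.log_div hy.ne' hx.ne'] at h1
  have h2 : x * (log y - log x) ≤ y - x := by
    have := mul_le_mul_of_nonneg_left h1 hx.le
    calc x * (log y - log x) ≤ x * (y/x - 1) := by nlinarith
      _ = y - x := by field_simp
  nlinarith

lemma log_fact_lower {j : ℕ} (hj : 1 ≤ j) :
    log (2*π*j) / 2 + j * (log (j:ℝ) - 1) ≤ log (j ! : ℝ) := by
  have hj' : (0:ℝ) < (j:ℝ) := by exact_mod_cast hj
  have h := fact_lower hj
  have hL : (0:ℝ) < √(2*π*j) * ((j:ℝ)/exp 1)^j := by positivity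
  have := Real.log_le_log hL h
  rw [Real.log_mul (by positivity) (by positivity), Real.log_sqrt (by positivity),
    Real.log_pow, Real.log_div hj'.ne' (Real.exp_pos 1).ne', Real.log_exp] at this
  linarith

lemma log_fact_upper {j : ℕ} (hj : 1 ≤ j) :
    log (j ! : ℝ) ≤ log (2*π*j) / 2 + j * (log (j:ℝ) - 1) + 1/12 := by
  have hj' : (0:ℝ) < (j:ℝ) := by exact_mod_cast hj
  have h := fact_upper hj
  have hf : (0:ℝ) < (j ! : ℝ) := by exact_mod_cast j.factorial_pos
  have := Real.log_le_log hf h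
  rw [Real.log_mul (by positivity) (Real.exp_pos _).ne',
    Real.log_mul (by positivity) (by positivity), Real.log_sqrt (by positivity),
    Real.log_pow, Real.log_div hj'.ne' (Real.exp_pos 1).ne', Real.log_exp,
    Real.log_exp] at this
  linarith



lemma main_ineq2 (mu lam x bK : ℝ) (hmu : 0 < mu) (hlam : 1 < lam)
    (hx : 2 ≤ x) (h1 : x*(mu*lam) ≤ bK) (h2 : bK ≤ x*(mu*lam)+1) :
    -(x*(mu*lam*log lam - (1+mu*lam)*log ((1+mu*lam)/(1+mu)))) - log (2*π*x)/2
      - (7/6 + log (lam + 2/mu))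
    ≤ ((x+bK-1)*log (x+bK-1) - bK*log bK - x*log x + 1
        + (log ((x+bK-1)/(2*π*bK*x)))/2 + log x - 1/6)
      + (x-1)*log (1/(1+mu)) + bK*log (mu/(1+mu)) := by
  have hlam0 : (0:ℝ) < lam := by linarith
  have hm : 0 < mu*lam := by positivity
  have hx0 : (0:ℝ) < x := by linarith
  have hxm : 0 < x*(mu*lam) := by positivity
  have hbK0 : 0 < bK := by linarith
  have ha0 : 0 < x+bK-1 := by linarith
  have hw0 : 0 < x*(mu*lam)+x-1 := by linarith
  have h1mu : (0:ℝ) < 1+mu := by linarith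
  have h1m : (0:ℝ) < 1+mu*lam := by linarith
  have hl2 : (0:ℝ) < lam+2/mu := by positivity
  -- rewrite composite logs in goal
  have eq1 : log ((1+mu*lam)/(1+mu)) = log (1+mu*lam) - log (1+mu) :=
    Real.log_div h1m.ne' h1mu.ne'
  have eq2 : log (1/(1+mu)) = -log (1+mu) := by rw [one_div, Real.log_inv]
  have eq3 : log (mu/(1+mu)) = log mu - log (1+mu) := Real.log_div hmu.ne' h1mu.ne'
  have eq4 : log ((x+bK-1)/(2*π*bK*x)) = log (x+bK-1) - log (2*π*x) - log bK := by
    rw [show 2*π*bK*x = (2*π*x)*bK by ring, Real.log_div ha0.ne' (by positivity),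
      Real.log_mul (by positivity) hbK0.ne']
    ring
  rw [eq1, eq2, eq3, eq4]
  -- expansions
  have E1 : log (x*(mu*lam)+x) = log x + log (1+mu*lam) := by
    rw [show x*(mu*lam)+x = x*(1+mu*lam) by ring, Real.log_mul hx0.ne' h1m.ne']
  have E2 : log (x*(mu*lam)) = log x + log mu + log lam := by
    rw [Real.log_mul hx0.ne' hm.ne', Real.log_mul hmu.ne' hlam0.ne']; ring
  -- main convexity facts
  have F1 : (x*(mu*lam)+x)*(log x + log (1+mu*lam))
      - (x*(mu*lam)+x-1)*log (x*(mu*lam)+x-1) ≤ 1 + (log x + log (1+mu*lam)) := by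
    have := S2 hw0 (show x*(mu*lam)+x-1 ≤ x*(mu*lam)+x by linarith)
    rw [E1] at this; linarith
  have F2 : ((x+bK-1)-(x*(mu*lam)+x-1))*(1+log (x*(mu*lam)+x-1))
      ≤ (x+bK-1)*log (x+bK-1) - (x*(mu*lam)+x-1)*log (x*(mu*lam)+x-1) :=
    S1 hw0 (by linarith)
  have F3 : bK*log bK - (x*(mu*lam))*(log x + log mu + log lam)
      ≤ (bK-x*(mu*lam))*(1+log bK) := by
    have := S2 hxm h1
    rw [E2] at this; linarith
  have F5 : log bK ≤ log (x+bK-1) := Real.log_le_log hbK0 (by linarith)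
  have F6 : log bK ≤ log (x*(mu*lam)+x-1) := Real.log_le_log hbK0 (by linarith)
  have F7 : log (1+mu*lam) ≤ log (1+mu) + log (lam+2/mu) := by
    have harg : 1+mu*lam ≤ (1+mu)*(lam+2/mu) := by
      have : (1+mu)*(lam+2/mu) = lam + 2/mu + mu*lam + 2 := by field_simp; ring
      rw [this]; have : (0:ℝ) < 2/mu := by positivity
      linarith
    calc log (1+mu*lam) ≤ log ((1+mu)*(lam+2/mu)) := Real.log_le_log h1m harg
      _ = log (1+mu) + log (lam+2/mu) := Real.log_mul h1mu.ne' hl2.ne'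
  have Lmu2 : log mu + log (lam+2/mu) = log (mu*lam+2) := by
    rw [← Real.log_mul hmu.ne' hl2.ne', show mu*(lam+2/mu) = mu*lam+2 by field_simp]
  have F9 : log (1+mu*lam) ≤ log (mu*lam+2) := Real.log_le_log h1m (by linarith)
  set W := log (x*(mu*lam)+x-1) + (log mu - log (1+mu)) - log bK with hW
  rcases le_or_gt 0 W with hc | hc
  · have P : 0 ≤ (bK - x*(mu*lam)) * W := mul_nonneg (by linarith) hc
    rw [hW] at P
    linarith [F1, F2, F3, P, F5, F7]
  · have P0 : 0 ≤ (bK - x*(mu*lam) - 1) * W :=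
      by
        have h' := mul_nonneg (neg_nonneg.2 (show bK - x*(mu*lam) - 1 ≤ 0 by linarith))
          (neg_nonneg.2 hc.le)
        rw [neg_mul_neg] at h'; exact h'
    have P : W ≤ (bK - x*(mu*lam)) * W := by nlinarith [P0]
    rw [hW] at P
    linarith [F1, F2, F3, P, F9, Lmu2, F5, F6]

lemma main_ineq1 (mu lam bK : ℝ) (hmu : 0 < mu) (hlam : 1 < lam)
    (h2 : bK ≤ mu*lam+1) :
    0 ≤ bK*log (mu/(1+mu)) + (mu*lam*log lam - (1+mu*lam)*log ((1+mu*lam)/(1+mu)))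
      + log (2*π)/2 + 7/6 + log (lam+2/mu) := by
  have hlam0 : (0:ℝ) < lam := by linarith
  have hm : 0 < mu*lam := by positivity
  have h1mu : (0:ℝ) < 1+mu := by linarith
  have h1m : (0:ℝ) < 1+mu*lam := by linarith
  have hl2 : (0:ℝ) < lam+2/mu := by positivity
  have eq1 : log ((1+mu*lam)/(1+mu)) = log (1+mu*lam) - log (1+mu) :=
    Real.log_div h1m.ne' h1mu.ne'
  have eq3 : log (mu/(1+mu)) = log mu - log (1+mu) := Real.log_div hmu.ne' h1mu.ne'
  rw [eq1, eq3]
  have hq : log mu - log (1+mu) ≤ 0 := by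
    have : log mu ≤ log (1+mu) := Real.log_le_log hmu (by linarith)
    linarith
  have prodfact : 0 ≤ (mu*lam+1-bK) * (log (1+mu) - log mu) :=
    mul_nonneg (by linarith) (by linarith)
  have Key : mu*lam*(log (1+mu*lam) - log mu - log lam) ≤ 1 := by
    have hd : (0:ℝ) < (1+mu*lam)/(mu*lam) := by positivity
    have hlog := Real.log_le_sub_one_of_pos hd
    rw [Real.log_div h1m.ne' hm.ne', Real.log_mul hmu.ne' hlam0.ne'] at hlog
    have h' : (1+mu*lam)/(mu*lam) - 1 = 1/(mu*lam) := by field_simp; ring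
    rw [h'] at hlog
    have := mul_le_mul_of_nonneg_left hlog hm.le
    have h'' : mu*lam*(1/(mu*lam)) = 1 := by field_simp
    nlinarith
  have Lmu2 : log mu + log (lam+2/mu) = log (mu*lam+2) := by
    rw [← Real.log_mul hmu.ne' hl2.ne', show mu*(lam+2/mu) = mu*lam+2 by field_simp]
  have F9 : log (1+mu*lam) ≤ log (mu*lam+2) := Real.log_le_log h1m (by linarith)
  have Pi : 0 ≤ log (2*π) := Real.log_nonneg (by nlinarith [Real.pi_gt_d6])
  nlinarith [prodfact, Key, Lmu2, F9, Pi]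


lemma core (mu lam : ℝ) (hmu : 0 < mu) (hlam : 1 < lam) (n K : ℕ) (hn : 1 ≤ n)
    (hK1 : 1 ≤ K) (h1 : (n:ℝ)*(mu*lam) ≤ K) (h2 : (K:ℝ) ≤ n*(mu*lam)+1) :
    Real.exp (-(n : ℝ) * ((mu * lam * Real.log lam - (1 + mu * lam) * Real.log ((1 + mu * lam) / (1 + mu))) + Real.log (2 * π * n) / (2 * n)
        + (7 / 6 + Real.log (lam + 2 / mu)) / n))
    ≤ ((n+K-1).choose K : ℝ) * (1/(1+mu))^(n-1) * (mu/(1+mu))^K := by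
  have h1mu : (0:ℝ) < 1+mu := by linarith
  have hn0 : (0:ℝ) < (n:ℝ) := by exact_mod_cast hn
  have hK0 : (0:ℝ) < (K:ℝ) := by exact_mod_cast hK1
  have hchoose : 0 < (n+K-1).choose K := Nat.choose_pos (by omega)
  have hC0 : (0:ℝ) < ((n+K-1).choose K : ℝ) := by exact_mod_cast hchoose
  have hp0 : (0:ℝ) < 1/(1+mu) := by positivity
  have hq0 : (0:ℝ) < mu/(1+mu) := by positivity
  have hB : (0:ℝ) < ((n+K-1).choose K : ℝ) * (1/(1+mu))^(n-1) * (mu/(1+mu))^K := by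
    positivity
  rw [← Real.exp_log hB]
  apply Real.exp_le_exp.mpr
  have hlogB : Real.log (((n+K-1).choose K : ℝ) * (1/(1+mu))^(n-1) * (mu/(1+mu))^K)
      = Real.log ((n+K-1).choose K : ℝ) + ((n-1 : ℕ):ℝ)*Real.log (1/(1+mu))
        + (K:ℝ)*Real.log (mu/(1+mu)) := by
    rw [Real.log_mul (by positivity) (by positivity), Real.log_mul hC0.ne' (by positivity),
      Real.log_pow, Real.log_pow]
    try ring
  rw [hlogB]
  have hexp : -(n : ℝ) * ((mu * lam * Real.log lam - (1 + mu * lam) * Real.log ((1 + mu * lam) / (1 + mu))) + Real.log (2 * π * n) / (2 * n)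
        + (7 / 6 + Real.log (lam + 2 / mu)) / n)
      = -((n:ℝ)*(mu * lam * Real.log lam - (1 + mu * lam) * Real.log ((1 + mu * lam) / (1 + mu))))
        - Real.log (2*π*n)/2 - (7/6 + Real.log (lam + 2/mu)) := by
    field_simp; ring
  rw [hexp]
  have hcast1 : ((n - 1 : ℕ) : ℝ) = (n:ℝ) - 1 := by
    have := Nat.cast_sub hn (R := ℝ); simpa using this
  rcases eq_or_lt_of_le hn with heq | hlt
  · -- n = 1
    have hn1 : n = 1 := heq.symm
    subst hn1
    have h2' : (K:ℝ) ≤ mu*lam+1 := by push_cast at h2; linarith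
    have main := main_ineq1 mu lam (K:ℝ) hmu hlam h2'
    have hCK : (1+K-1).choose K = 1 := by rw [show 1+K-1 = K by omega, Nat.choose_self]
    rw [hCK]
    simp only [Nat.cast_one, Nat.cast_zero, Real.log_one, Nat.sub_self, zero_mul, mul_one]
    linarith
  · -- n ≥ 2
    have hn2 : 2 ≤ n := hlt
    have hx2 : (2:ℝ) ≤ (n:ℝ) := by exact_mod_cast hn2
    have hacast : ((n+K-1 : ℕ) : ℝ) = (n:ℝ) + K - 1 := by
      rw [Nat.cast_sub (by omega)]; push_cast; ring
    have ha1 : 1 ≤ n+K-1 := by omega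
    have ha0 : (0:ℝ) < (n:ℝ) + (K:ℝ) - 1 := by linarith
    have hfact : ((n+K-1).choose K : ℝ) = ((n+K-1)! : ℝ) / ((K ! : ℝ) * ((n-1)! : ℝ)) := by
      have h := Nat.choose_mul_factorial_mul_factorial (show K ≤ n+K-1 by omega)
      have h' : n+K-1-K = n-1 := by omega
      rw [h'] at h
      have hcast := congrArg (fun t : ℕ => (t : ℝ)) h
      push_cast at hcast
      have hf1 : (0:ℝ) < (K ! : ℝ) := by exact_mod_cast K.factorial_pos
      have hf2 : (0:ℝ) < ((n-1)! : ℝ) := by exact_mod_cast (n-1).factorial_pos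
      field_simp
      linarith [hcast]
    have hlogC : Real.log ((n+K-1).choose K : ℝ)
        = Real.log ((n+K-1)! : ℝ) - Real.log (K ! : ℝ) - Real.log ((n-1)! : ℝ) := by
      rw [hfact, Real.log_div (by positivity) (by positivity),
        Real.log_mul (by positivity) (by positivity)]
      ring
    have hA := log_fact_lower ha1
    rw [hacast] at hA
    have hBu := log_fact_upper hK1
    have hnfact : (n ! : ℝ) = (n:ℝ) * ((n-1)! : ℝ) := by
      have h : n ! = n * (n-1)! := by
        conv_lhs => rw [show n = (n-1)+1 by omega, Nat.factorial_succ,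
          show (n-1)+1 = n by omega]
      exact_mod_cast h
    have hCu : Real.log ((n-1)! : ℝ) = Real.log (n ! : ℝ) - Real.log (n:ℝ) := by
      rw [hnfact, Real.log_mul hn0.ne' (by positivity)]; ring
    have hDu := log_fact_upper hn
    have s1 : Real.log (2*π*((n:ℝ)+K-1)) = Real.log (2*π) + Real.log ((n:ℝ)+K-1) :=
      Real.log_mul Real.two_pi_pos.ne' ha0.ne'
    have s2 : Real.log (2*π*(K:ℝ)) = Real.log (2*π) + Real.log (K:ℝ) :=
      Real.log_mul Real.two_pi_pos.ne' hK0.ne'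
    have s3 : Real.log (2*π*(n:ℝ)) = Real.log (2*π) + Real.log (n:ℝ) :=
      Real.log_mul Real.two_pi_pos.ne' hn0.ne'
    have s4 : Real.log (((n:ℝ)+K-1)/(2*π*(K:ℝ)*(n:ℝ)))
        = Real.log ((n:ℝ)+K-1) - (Real.log (2*π) + Real.log (K:ℝ) + Real.log (n:ℝ)) := by
      rw [Real.log_div ha0.ne' (by positivity),
        Real.log_mul (by positivity) hn0.ne',
        Real.log_mul Real.two_pi_pos.ne' hK0.ne']
      try ring
    have eqhalf : Real.log (2*π*((n:ℝ)+K-1))/2 - Real.log (2*π*(K:ℝ))/2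
          - Real.log (2*π*(n:ℝ))/2
        = (Real.log (((n:ℝ)+K-1)/(2*π*(K:ℝ)*(n:ℝ))))/2 := by
      rw [s1, s2, s3, s4]
      ring
    have main := main_ineq2 mu lam (n:ℝ) (K:ℝ) hmu hlam hx2 h1 h2
    rw [hcast1]
    linarith [main, hlogC, hA, hBu, hCu, hDu, eqhalf]


section Prob
variable {Omega : Type*} [MeasurableSpace Omega] (P : Measure Omega) [IsProbabilityMeasure P]

lemma tail_geom (p : ℝ) (hp : p ∈ Set.Ioo (0 : ℝ) 1) (Y : Omega → ℕ)
    (hdist : ∀ k, P {omega | Y omega = k} = ENNReal.ofReal (p * (1 - p) ^ k))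
    (hYmeas : Measurable Y) (j : ℕ) :
    P {omega | j ≤ Y omega} = ENNReal.ofReal ((1-p)^j) := by
  obtain ⟨hp0, hp1⟩ := hp
  have hq0 : (0:ℝ) ≤ 1 - p := by linarith
  have hq1 : (1:ℝ) - p < 1 := by linarith
  have hsets : {omega | j ≤ Y omega} = ⋃ t : ℕ, {omega | Y omega = j + t} := by
    ext ω; simp only [Set.mem_setOf_eq, Set.mem_iUnion]
    constructor
    · intro h; exact ⟨Y ω - j, by omega⟩
    · rintro ⟨t, ht⟩; omega
  rw [hsets, measure_iUnion]
  · have hterm : ∀ t : ℕ, P {omega | Y omega = j + t}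
        = ENNReal.ofReal (p * (1-p)^j) * (ENNReal.ofReal (1-p))^t := by
      intro t
      rw [hdist (j+t), pow_add, ← ENNReal.ofReal_pow hq0,
        ← ENNReal.ofReal_mul (by positivity)]
      ring_nf
    simp_rw [hterm]
    rw [ENNReal.tsum_mul_left, ENNReal.tsum_geometric]
    have h1 : (1 : ℝ≥0∞) - ENNReal.ofReal (1-p) = ENNReal.ofReal p := by
      rw [← ENNReal.ofReal_one, ← ENNReal.ofReal_sub _ hq0]
      norm_num
    rw [h1, ENNReal.ofReal_mul (by positivity)]
    have hpne : ENNReal.ofReal p ≠ 0 := by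
      simp [ENNReal.ofReal_eq_zero]; linarith
    rw [mul_comm (ENNReal.ofReal p) _, mul_assoc,
      ENNReal.mul_inv_cancel hpne ENNReal.ofReal_ne_top, mul_one]
  · intro s t hst
    simp only [Function.onFun, Set.disjoint_left]
    intro ω h1 h2
    simp only [Set.mem_setOf_eq] at h1 h2
    exact hst (by omega)
  · intro t
    exact hYmeas (measurableSet_singleton (j+t))

lemma prob_lower (p : ℝ) (hp : p ∈ Set.Ioo (0 : ℝ) 1) (n : ℕ)
    (X : Fin n → Omega → ℕ)
    (hmeas : ∀ i, Measurable (X i))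
    (hindep : iIndepFun X P)
    (hdist : ∀ i k, P {omega | X i omega = k} = ENNReal.ofReal (p * (1 - p) ^ k))
    (K : ℕ) (hn : 1 ≤ n) :
    ENNReal.ofReal (((n+K-1).choose K : ℝ) * (p^(n-1) * (1-p)^K))
      ≤ P {omega | K ≤ ∑ i, X i omega} := by
  obtain ⟨hp0, hp1⟩ := hp
  have hq0 : (0:ℝ) ≤ 1 - p := by linarith
  set j0 : Fin n := ⟨n-1, by omega⟩ with hj0
  set T : Finset (Fin n → ℕ) := Finset.Nat.antidiagonalTuple n K with hT
  have hsumT : ∀ a ∈ T, ∑ i, a i = K := fun a ha =>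
    Finset.Nat.mem_antidiagonalTuple.mp ha
  set S : (Fin n → ℕ) → Fin n → Set ℕ :=
    fun a i => if i = j0 then Set.Ici (a i) else {a i} with hS
  set E : (Fin n → ℕ) → Set Omega := fun a => ⋂ i, X i ⁻¹' (S a i) with hE
  -- measure of E a
  have hmeasE : ∀ a : Fin n → ℕ, (∑ i, a i = K) →
      P (E a) = ENNReal.ofReal (p^(n-1) * (1-p)^K) := by
    intro a ha
    have := hindep.meas_iInter (s := fun i => X i ⁻¹' (S a i))
      (fun i => ⟨S a i, trivial, rfl⟩)
    rw [hE] at *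
    rw [this]
    have hval : ∀ i : Fin n, P (X i ⁻¹' (S a i))
        = if i = j0 then ENNReal.ofReal ((1-p)^(a i)) else ENNReal.ofReal (p*(1-p)^(a i)) := by
      intro i
      by_cases h : i = j0
      · rw [h, if_pos rfl, show S a j0 = Set.Ici (a j0) from by simp [hS]]
        have h2 : X j0 ⁻¹' (Set.Ici (a j0)) = {omega | a j0 ≤ X j0 omega} := rfl
        rw [h2, tail_geom P p ⟨hp0, hp1⟩ (X j0) (hdist j0) (hmeas j0)]
      · rw [if_neg h, show S a i = {a i} from by simp [hS, h]]
        have h2 : X i ⁻¹' {a i} = {omega | X i omega = a i} := rfl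
        rw [h2, hdist i (a i)]
    rw [Finset.prod_congr rfl (fun i _ => hval i)]
    rw [← Finset.mul_prod_erase Finset.univ _ (Finset.mem_univ j0), if_pos rfl]
    have hprod : ∏ i ∈ Finset.univ.erase j0,
        (if i = j0 then ENNReal.ofReal ((1-p)^(a i)) else ENNReal.ofReal (p*(1-p)^(a i)))
        = ∏ i ∈ Finset.univ.erase j0, ENNReal.ofReal (p*(1-p)^(a i)) := by
      apply Finset.prod_congr rfl
      intro i hi
      rw [if_neg (Finset.ne_of_mem_erase hi)]
    rw [hprod, ← ENNReal.ofReal_prod_of_nonneg (fun i _ => by positivity)]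
    rw [← ENNReal.ofReal_mul (by positivity)]
    congr 1
    have hcard : (Finset.univ.erase j0).card = n - 1 := by
      rw [Finset.card_erase_of_mem (Finset.mem_univ j0), Finset.card_univ, Fintype.card_fin]
    have hprodreal : ∏ i ∈ Finset.univ.erase j0, (p*(1-p)^(a i))
        = p^(n-1) * (1-p)^(∑ i ∈ Finset.univ.erase j0, a i) := by
      rw [Finset.prod_mul_distrib, Finset.prod_const, hcard, Finset.prod_pow_eq_pow_sum]
    rw [hprodreal]
    have hsum : a j0 + ∑ i ∈ Finset.univ.erase j0, a i = K := by
      rw [Finset.add_sum_erase Finset.univ a (Finset.mem_univ j0)]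
      exact ha
    rw [← hsum, pow_add]
    ring
  -- inclusion
  have hincl : ∀ a ∈ T, E a ⊆ {omega | K ≤ ∑ i, X i omega} := by
    intro a ha ω hω
    simp only [hE, Set.mem_iInter, Set.mem_preimage] at hω
    simp only [Set.mem_setOf_eq]
    have hle : ∀ i : Fin n, a i ≤ X i ω := by
      intro i
      have := hω i
      by_cases h : i = j0
      · subst h; simp only [hS, if_pos, Set.mem_Ici] at this; exact this
      · simp only [hS, if_neg h, Set.mem_singleton_iff] at this; omega
    calc K = ∑ i, a i := (hsumT a ha).symm
      _ ≤ ∑ i, X i ω := Finset.sum_le_sum (fun i _ => hle i)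
  -- disjointness
  have hdisj : Set.PairwiseDisjoint (T : Set (Fin n → ℕ)) E := by
    intro a ha b hb hab
    simp only [Function.onFun, Set.disjoint_left]
    intro ω hωa hωb
    apply hab
    simp only [hE, Set.mem_iInter, Set.mem_preimage] at hωa hωb
    have hne : ∀ i : Fin n, i ≠ j0 → a i = b i := by
      intro i hi
      have h1 := hωa i; have h2 := hωb i
      simp only [hS, if_neg hi, Set.mem_singleton_iff] at h1 h2
      omega
    have hsa := hsumT a (by exact_mod_cast ha)
    have hsb := hsumT b (by exact_mod_cast hb)
    funext i
    by_cases h : i = j0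
    · subst h
      have e1 : a j0 + ∑ i ∈ Finset.univ.erase j0, a i = K := by
        rw [Finset.add_sum_erase Finset.univ a (Finset.mem_univ j0)]; exact hsa
      have e2 : b j0 + ∑ i ∈ Finset.univ.erase j0, b i = K := by
        rw [Finset.add_sum_erase Finset.univ b (Finset.mem_univ j0)]; exact hsb
      have e3 : ∑ i ∈ Finset.univ.erase j0, a i = ∑ i ∈ Finset.univ.erase j0, b i :=
        Finset.sum_congr rfl (fun i hi => hne i (Finset.ne_of_mem_erase hi))
      omega
    · exact hne i h
  -- cardinality
  have hcardT : T.card = (n+K-1).choose K := by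
    have e : {f // f ∈ T} ≃ Sym (Fin n) K :=
      (Equiv.subtypeEquivRight (fun f => Finset.Nat.mem_antidiagonalTuple)).trans
        (Sym.equivNatSumOfFintype (Fin n) K).symm
    rw [← Fintype.card_coe T, Fintype.card_congr e, Sym.card_sym_eq_choose, Fintype.card_fin]
  -- combine
  have hmeasE' : ∀ a ∈ T, MeasurableSet (E a) := by
    intro a _
    exact MeasurableSet.iInter (fun i => hmeas i trivial)
  calc ENNReal.ofReal (((n+K-1).choose K : ℝ) * (p^(n-1) * (1-p)^K))
      = ∑ a ∈ T, ENNReal.ofReal (p^(n-1) * (1-p)^K) := by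
        rw [Finset.sum_const, nsmul_eq_mul, hcardT,
          ENNReal.ofReal_mul (by positivity), ENNReal.ofReal_natCast]
    _ = ∑ a ∈ T, P (E a) := by
        apply Finset.sum_congr rfl
        intro a ha
        rw [hmeasE a (hsumT a ha)]
    _ = P (⋃ a ∈ T, E a) := (measure_biUnion_finset hdisj hmeasE').symm
    _ ≤ P {omega | K ≤ ∑ i, X i omega} := by
        apply measure_mono
        exact Set.iUnion₂_subset hincl

end Prob


theorem geometric_upper_tail_lower_bound
    {Omega : Type*} [MeasurableSpace Omega] (P : Measure Omega) [IsProbabilityMeasure P]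
    (p : ℝ) (hp : p ∈ Set.Ioo (0 : ℝ) 1) (n : ℕ)
    (X : Fin n → Omega → ℕ)
    (hmeas : ∀ i, Measurable (X i))
    (hindep : iIndepFun X P)
    (hdist : ∀ i k, P {omega | X i omega = k} = ENNReal.ofReal (p * (1 - p) ^ k))
    (mu : ℝ) (hmu : mu = (1 - p) / p)
    (lam : ℝ) (hlam : 1 < lam) (hn : 1 ≤ n) :
    Real.exp (-(n : ℝ) * ((mu * lam * Real.log lam - (1 + mu * lam) * Real.log ((1 + mu * lam) / (1 + mu))) + Real.log (2 * Real.pi * n) / (2 * n)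
        + (7 / 6 + Real.log (lam + 2 / mu)) / n)) ≤
      (P {omega | lam * mu ≤ (∑ i, (X i omega : ℝ)) / n}).toReal := by
  obtain ⟨hp0, hp1⟩ := hp
  have hmu0 : 0 < mu := by rw [hmu]; apply _root_.div_pos <;> linarith
  have h1mu : (0:ℝ) < 1 + mu := by linarith
  have hpmu : 1/(1+mu) = p := by rw [hmu]; field_simp; ring
  have hqmu : mu/(1+mu) = 1-p := by
    rw [hmu]
    rw [show 1 + (1-p)/p = 1/p from by field_simp; ring]
    field_simp
  have hn0 : (0:ℝ) < (n:ℝ) := by exact_mod_cast hn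
  set K := ⌈(n:ℝ)*(mu*lam)⌉₊ with hKdef
  have hK1 : 1 ≤ K := by
    have : 0 < K := Nat.ceil_pos.mpr (by positivity)
    omega
  have h1 : (n:ℝ)*(mu*lam) ≤ K := Nat.le_ceil _
  have h2 : (K:ℝ) ≤ n*(mu*lam)+1 := le_of_lt (Nat.ceil_lt_add_one (by positivity))
  have hcore := core mu lam hmu0 hlam n K hn hK1 h1 h2
  rw [hpmu, hqmu] at hcore
  have hprob := prob_lower P p ⟨hp0, hp1⟩ n X hmeas hindep hdist K hn
  have hsub : {omega | K ≤ ∑ i, X i omega}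
      ⊆ {omega | lam * mu ≤ (∑ i, (X i omega : ℝ)) / n} := by
    intro ω hω
    simp only [Set.mem_setOf_eq] at hω ⊢
    have hcast : ((∑ i, X i ω : ℕ) : ℝ) = ∑ i, (X i ω : ℝ) := by push_cast; rfl
    have hKle : (K:ℝ) ≤ ∑ i, (X i ω : ℝ) := by
      rw [← hcast]; exact_mod_cast hω
    rw [le_div_iff₀ hn0]
    calc lam * mu * n = (n:ℝ)*(mu*lam) := by ring
      _ ≤ K := h1
      _ ≤ _ := hKle
  have hfinal : ENNReal.ofReal (Real.exp (-(n : ℝ) * ((mu * lam * Real.log lam - (1 + mu * lam) * Real.log ((1 + mu * lam) / (1 + mu))) + Real.log (2 * Real.pi * n) / (2 * n)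
        + (7 / 6 + Real.log (lam + 2 / mu)) / n)))
      ≤ P {omega | lam * mu ≤ (∑ i, (X i omega : ℝ)) / n} := by
    calc ENNReal.ofReal _ ≤ ENNReal.ofReal (((n+K-1).choose K : ℝ) * (p^(n-1) * (1-p)^K)) := by
          apply ENNReal.ofReal_le_ofReal
          calc _ ≤ ((n+K-1).choose K : ℝ) * p^(n-1) * (1-p)^K := hcore
            _ = ((n+K-1).choose K : ℝ) * (p^(n-1) * (1-p)^K) := by ring
      _ ≤ P {omega | K ≤ ∑ i, X i omega} := hprob
      _ ≤ _ := measure_mono hsub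
  calc Real.exp (-(n : ℝ) * ((mu * lam * Real.log lam - (1 + mu * lam) * Real.log ((1 + mu * lam) / (1 + mu))) + Real.log (2 * Real.pi * n) / (2 * n)
        + (7 / 6 + Real.log (lam + 2 / mu)) / n))
      = (ENNReal.ofReal (Real.exp (-(n : ℝ) * ((mu * lam * Real.log lam - (1 + mu * lam) * Real.log ((1 + mu * lam) / (1 + mu))) + Real.log (2 * Real.pi * n) / (2 * n)
        + (7 / 6 + Real.log (lam + 2 / mu)) / n)))).toReal :=
        (ENNReal.toReal_ofReal (Real.exp_nonneg _)).symm
    _ ≤ (P {omega | lam * mu ≤ (∑ i, (X i omega : ℝ)) / n}).toReal :=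
        ENNReal.toReal_mono (measure_ne_top P _) hfinal
end

section
/- Let p ∈ (0,1), μ = (1−p)/p, and let X₁,…,Xₙ be independent, identically distributed geometric random variables with Pr[X = k] = p(1−p)^k for k = 0,1,2,…; let X̄ₙ = (X₁+⋯+Xₙ)/n. Then for every λ ∈ (0,1) and every integer n ≥ 1/(λμ), Pr[X̄ₙ ≤ λμ] ≥ exp(−n·[H(λ,μ) + ln(2πn)/(2n) + Δ_L(λ,μ)/n]), where H(λ,μ) = μλ·ln λ − (1+μλ)·ln((1+μλ)/(1+μ)) and Δ_L(λ,μ) = 1/6 + (3/2)·ln(1 + 1/(λμ)). -/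
open MeasureTheory ProbabilityTheory Real Filter

section AuxGeomTail
open Finset Nat

theorem list_range_toFinset (k : ℕ) : (List.range k).toFinset = Finset.range k := by
  ext x; simp

theorem adt_len : ∀ n k : ℕ, (List.Nat.antidiagonalTuple (n+1) k).length = (n + k).choose k := by
  intro n
  induction n with
  | zero =>
    intro k
    rw [List.Nat.antidiagonalTuple_one]
    simp
  | succ n ih =>
    intro k
    rw [show List.Nat.antidiagonalTuple (n+2) k =
      (List.Nat.antidiagonal k).flatMap (fun ni => (List.Nat.antidiagonalTuple (n+1) ni.2).map
        fun x => Fin.cons ni.1 x) from rfl]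
    rw [List.length_flatMap]
    rw [show List.Nat.antidiagonal k = (List.range (k+1)).map fun i => (i, k - i) from rfl]
    simp only [List.map_map, Function.comp_def, List.length_map, ih]
    rw [← List.sum_toFinset _ List.nodup_range, list_range_toFinset]
    have hrefl := Finset.sum_range_reflect (fun j => (n + j).choose j) (k+1)
    simp only [Nat.add_sub_cancel] at hrefl
    rw [hrefl]
    have e1 : ∀ j ∈ Finset.range (k+1), (n + j).choose j = (j + n).choose n := by
      intro j hj
      rw [add_comm n j, Nat.choose_symm_add]
    rw [Finset.sum_congr rfl e1, Nat.sum_range_add_choose]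
    rw [show n + 1 + k = k + n + 1 by omega]
    rw [show k + n + 1 = (n+1) + k by omega, Nat.choose_symm_add]

theorem adt_card (n k : ℕ) : (Finset.Nat.antidiagonalTuple (n+1) k).card = (n + k).choose k := by
  rw [show (Finset.Nat.antidiagonalTuple (n+1) k).card
      = (List.Nat.antidiagonalTuple (n+1) k).length from rfl, adt_len]

theorem stirling_diff_le (n : ℕ) :
    Real.log (Stirling.stirlingSeq (n + 1)) - Real.log (Stirling.stirlingSeq (n + 2)) ≤
      1 / (12 * (n+1) * (n+2)) := by
  have h_nonneg : (0 : ℝ) ≤ ((1 : ℝ) / (2 * ↑(n + 1) + 1)) ^ 2 := sq_nonneg _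
  set c : ℝ := ((1 : ℝ) / (2 * ↑(n + 1) + 1)) ^ 2 with hc
  have hc1 : c < 1 := by
    rw [hc, one_div, inv_pow]
    exact inv_lt_one_of_one_lt₀ (one_lt_pow₀ (by push_cast; nlinarith [Nat.cast_nonneg (α := ℝ) n]) two_ne_zero)
  have g : HasSum (fun k : ℕ => (1:ℝ)/3 * c ^ (k + 1)) ((1/3) * (c / (1 - c))) := by
    have := (hasSum_geometric_of_lt_one h_nonneg hc1).mul_left c
    simp_rw [← _root_.pow_succ'] at this
    exact this.mul_left _
  have hab : ∀ k : ℕ, (1 : ℝ) / (2 * ↑(k + 1) + 1) * c ^ (k + 1) ≤ (1:ℝ)/3 * c ^ (k + 1) := by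
    intro k
    apply mul_le_mul_of_nonneg_right _ (pow_nonneg h_nonneg _)
    rw [div_le_div_iff₀ (by positivity) (by norm_num)]
    push_cast
    nlinarith [Nat.cast_nonneg (α := ℝ) k]
  have key := hasSum_le hab (Stirling.log_stirlingSeq_diff_hasSum n) g
  refine key.trans (le_of_eq ?_)
  have h1 : (2 * ((n:ℝ) + 1) + 1) ^ 2 ≠ 0 := by positivity
  rw [hc]
  push_cast
  have h3 : (0:ℝ) < 1 - (1/(2*((n:ℝ)+1)+1))^2 := by
    rw [sub_pos, one_div, inv_pow]
    exact inv_lt_one_of_one_lt₀ (one_lt_pow₀ (by nlinarith [Nat.cast_nonneg (α := ℝ) n]) two_ne_zero)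
  have h4 : (2*((n:ℝ)+1)+1) ≠ 0 := by positivity
  have h5 : ((n:ℝ)+1) ≠ 0 := by positivity
  have h6 : ((n:ℝ)+2) ≠ 0 := by positivity
  rw [mul_div_assoc']
  rw [div_eq_div_iff (by positivity) (by positivity)]
  field_simp
  ring

theorem stirling_log_le (N : ℕ) (hN : 1 ≤ N) :
    Real.log (Stirling.stirlingSeq N) ≤ Real.log (Real.sqrt π) + 1 / (12 * N) := by
  set v : ℕ → ℝ := fun M => Real.log (Stirling.stirlingSeq M) - 1 / (12 * M) with hv
  have hmono : ∀ M, 1 ≤ M → v M ≤ v (M + 1) := by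
    intro M hM
    obtain ⟨m, rfl⟩ := Nat.exists_eq_add_of_le hM
    have := stirling_diff_le m
    have heq : 1 + m = m + 1 := by omega
    rw [hv]
    simp only [heq] at this ⊢
    have hc : ((m:ℝ)+1) > 0 := by positivity
    have hc2 : ((m:ℝ)+2) > 0 := by positivity
    push_cast
    have : Real.log (Stirling.stirlingSeq (m + 1)) - Real.log (Stirling.stirlingSeq (m + 1 + 1)) ≤
        1 / (12 * ((m:ℝ)+1)) - 1 / (12*((m:ℝ)+2)) := by
      refine (by exact_mod_cast this : _ ≤ 1 / (12 * ((m:ℝ)+1) * ((m:ℝ)+2))).trans (le_of_eq ?_)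
      field_simp
      ring
    push_cast at this ⊢
    have he2 : 1 / (12 * ((m:ℝ) + 1 + 1)) = 1/(12*((m:ℝ)+2)) := by ring_nf
    linarith
  have hchain : ∀ M, N ≤ M → v N ≤ v M := by
    intro M hM
    induction M, hM using Nat.le_induction with
    | base => exact le_refl _
    | succ M hM ih => exact ih.trans (hmono M (hN.trans hM))
  have hlim : Tendsto v atTop (nhds (Real.log (Real.sqrt π))) := by
    have h1 : Tendsto (fun M : ℕ => Real.log (Stirling.stirlingSeq M)) atTop
        (nhds (Real.log (Real.sqrt π))) := by
      exact ((Real.continuousAt_log (by positivity)).tendsto).comp Stirling.tendsto_stirlingSeq_sqrt_pi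
    have h2 : Tendsto (fun M : ℕ => 1 / (12 * (M:ℝ))) atTop (nhds 0) := by
      simpa using Filter.Tendsto.div_atTop (tendsto_const_nhds (x := (1:ℝ)))
        (Filter.Tendsto.const_mul_atTop (by norm_num) tendsto_natCast_atTop_atTop)
    have h3 := h1.sub h2
    rw [sub_zero] at h3
    exact h3
  have : v N ≤ Real.log (Real.sqrt π) :=
    ge_of_tendsto hlim (Filter.eventually_atTop.2 ⟨N, hchain⟩)
  rw [hv] at this
  linarith [this]

theorem stirling_log_ge (N : ℕ) (hN : 1 ≤ N) :
    Real.log (Real.sqrt π) ≤ Real.log (Stirling.stirlingSeq N) := by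
  apply Real.log_le_log (by positivity)
  refine le_of_tendsto Stirling.tendsto_stirlingSeq_sqrt_pi (Filter.eventually_atTop.2 ⟨N, ?_⟩)
  intro M hM
  have h1 : N - 1 + 1 = N := by omega
  have h2 : M - 1 + 1 = M := by omega
  calc Stirling.stirlingSeq M = Stirling.stirlingSeq ((M-1) + 1) := by rw [h2]
    _ ≤ Stirling.stirlingSeq ((N-1) + 1) := Stirling.stirlingSeq'_antitone (by omega)
    _ = Stirling.stirlingSeq N := by rw [h1]

theorem log_factorial_bounds (N : ℕ) (hN : 1 ≤ N) :
    1/2 * Real.log (2*π*N) + N * Real.log N - N ≤ Real.log (N !) ∧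
    Real.log (N !) ≤ 1/2 * Real.log (2*π*N) + N * Real.log N - N + 1/(12*N) := by
  have hNpos : (0:ℝ) < N := by exact_mod_cast hN
  have hform := Stirling.log_stirlingSeq_formula N
  have hNe : Real.log ((N:ℝ) / Real.exp 1) = Real.log N - 1 := by
    rw [Real.log_div (ne_of_gt hNpos) (Real.exp_ne_zero 1), Real.log_exp]
  have hsplit : Real.log (Real.sqrt π) + 1/2 * Real.log (2*N) = 1/2 * Real.log (2*π*N) := by
    rw [Real.log_sqrt Real.pi_nonneg, Real.log_mul (by norm_num) (ne_of_gt hNpos),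
      Real.log_mul (mul_ne_zero (by norm_num) Real.pi_ne_zero) (ne_of_gt hNpos),
      Real.log_mul (by norm_num : (2:ℝ) ≠ 0) Real.pi_ne_zero]
    ring
  have h1 := stirling_log_ge N hN
  have h2 := stirling_log_le N hN
  rw [hform, hNe] at h1 h2
  constructor
  · nlinarith
  · nlinarith

theorem tangent_bound (N M x : ℝ) (hN : 0 < N) (hM : 0 < M) (hx : M ≤ x) :
    (N+x)*Real.log (N+x) - x*Real.log x ≤
      (N+M)*Real.log (N+M) - M*Real.log M + (x-M)*(Real.log (N+M) - Real.log M) := by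
  set h : ℝ → ℝ := fun u => (N+M)*Real.log (N+M) - M*Real.log M
      + (u-M)*(Real.log (N+M) - Real.log M) - (N+u)*Real.log (N+u) + u*Real.log u with hh
  have key : h M ≤ h x := by
    have hd : ∀ u ∈ Set.Ici M, HasDerivAt h
        (Real.log (N+M) - Real.log M - Real.log (N+u) + Real.log u) u := by
      intro u hu
      have hu0 : 0 < u := lt_of_lt_of_le hM hu
      have h1 : HasDerivAt (fun u : ℝ => u * Real.log u) (Real.log u + 1) u :=
        Real.hasDerivAt_mul_log (ne_of_gt hu0)
      have h2 : HasDerivAt (fun u : ℝ => (N+u) * Real.log (N+u)) (Real.log (N+u) + 1) u := by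
        have := (Real.hasDerivAt_mul_log (ne_of_gt (by linarith : (0:ℝ) < N + u))).comp u
          ((hasDerivAt_id u).const_add N)
        simpa [Function.comp_def] using this
      have h3 : HasDerivAt (fun u : ℝ => (u-M)*(Real.log (N+M) - Real.log M))
          (Real.log (N+M) - Real.log M) u := by
        simpa using ((hasDerivAt_id u).sub_const M).mul_const (Real.log (N+M) - Real.log M)
      have h4 := h3.const_add ((N+M)*Real.log (N+M) - M*Real.log M)
      have := (h4.sub h2).add h1
      refine HasDerivAt.congr_deriv this ?_
      ring
    have hmono : MonotoneOn h (Set.Ici M) := by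
      apply monotoneOn_of_deriv_nonneg (convex_Ici M)
      · exact fun u hu => (hd u hu).continuousAt.continuousWithinAt
      · exact fun u hu => (hd u (Set.mem_Ici.2 (le_of_lt (by simpa using hu)))).differentiableAt.differentiableWithinAt
      · intro u hu
        rw [interior_Ici] at hu
        have hu' : M < u := hu
        have hu0 : 0 < u := lt_of_le_of_lt hM.le hu'
        rw [(hd u (Set.mem_Ici.2 hu'.le)).deriv]
        have hlog : Real.log (N+u) - Real.log u ≤ Real.log (N+M) - Real.log M := by
          rw [← Real.log_div (by positivity) (ne_of_gt hu0),
            ← Real.log_div (by positivity) (ne_of_gt hM)]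
          apply Real.log_le_log (by positivity)
          rw [div_le_div_iff₀ hu0 hM]
          nlinarith
        linarith
    exact hmono Set.self_mem_Ici (Set.mem_Ici.2 hx) hx
  have hM0 : h M = 0 := by rw [hh]; simp
  rw [hM0] at key
  rw [hh] at key
  simp only at key
  linarith

theorem cube_ineq (N M : ℝ) (hN : 1 ≤ N) (hM : 1 ≤ M) :
    1/2 * (Real.log (N+M) - Real.log M) ≤ 3/2 * (Real.log (N+M+1) - Real.log (M+1)) := by
  rw [← Real.log_div (by positivity) (by positivity), ← Real.log_div (by positivity) (by positivity)]
  have h3 : (3:ℝ)/2 * Real.log ((N+M+1)/(M+1)) = 1/2 * Real.log (((N+M+1)/(M+1))^3) := by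
    rw [Real.log_pow]
    push_cast
    ring
  rw [h3]
  apply mul_le_mul_of_nonneg_left _ (by norm_num)
  apply Real.log_le_log (by positivity)
  rw [div_pow, div_le_div_iff₀ (by positivity) (by positivity)]
  nlinarith [sq_nonneg (M+1), sq_nonneg N, sq_nonneg (N*M - 1), mul_pos (mul_pos (show (0:ℝ) < N by linarith) (show (0:ℝ) < M by linarith)) (show (0:ℝ) < M by linarith), sq_nonneg (N-1), sq_nonneg (M-1)]

theorem key_ineq (n m : ℕ) (hn : 1 ≤ n) (hm : 1 ≤ m) (x : ℝ)
    (h1 : (m:ℝ) ≤ x) (h2 : x ≤ (m:ℝ)+1) :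
    ((n:ℝ)+x)*Real.log ((n:ℝ)+x) - x*Real.log x - (n:ℝ)*Real.log (n:ℝ) ≤
      Real.log ((n+m).choose m : ℝ) + 1/2*Real.log (2*π*(n:ℝ)) + 1/6
        + 3/2*(Real.log ((n:ℝ)+x) - Real.log x) := by
  set N : ℝ := (n:ℝ) with hN
  set M : ℝ := (m:ℝ) with hM
  have hN1 : 1 ≤ N := by rw [hN]; exact_mod_cast hn
  have hM1 : 1 ≤ M := by rw [hM]; exact_mod_cast hm
  have hN0 : 0 < N := by linarith
  have hM0 : 0 < M := by linarith
  have hx0 : 0 < x := lt_of_lt_of_le hM0 h1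
  -- log of choose
  have hchoose : Real.log ((n+m).choose m : ℝ)
      = Real.log ((Nat.factorial (n+m) : ℕ) : ℝ) - Real.log ((Nat.factorial m : ℕ) : ℝ) - Real.log ((Nat.factorial n : ℕ) : ℝ) := by
    have hid : ((n+m).choose m) * Nat.factorial n * Nat.factorial m = Nat.factorial (n+m) := Nat.add_choose_mul_factorial_mul_factorial n m
    have : ((n+m).choose m : ℝ) * ((Nat.factorial n : ℕ) : ℝ) * ((Nat.factorial m : ℕ) : ℝ) = ((Nat.factorial (n+m) : ℕ) : ℝ) := by exact_mod_cast congrArg Nat.cast hid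
    have hc0 : (0:ℝ) < ((n+m).choose m : ℝ) := by
      exact_mod_cast Nat.choose_pos (by omega : m ≤ n + m)
    have hf1 : (0:ℝ) < ((Nat.factorial n : ℕ) : ℝ) := by exact_mod_cast n.factorial_pos
    have hf2 : (0:ℝ) < ((Nat.factorial m : ℕ) : ℝ) := by exact_mod_cast m.factorial_pos
    rw [← this, Real.log_mul (by positivity) (ne_of_gt hf2), Real.log_mul (ne_of_gt hc0) (ne_of_gt hf1)]
    ring
  -- Stirling bounds
  have hnm1 : 1 ≤ n + m := by omega
  have I1 := (log_factorial_bounds (n+m) hnm1).1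
  have I2 := (log_factorial_bounds m hm).2
  have I3 := (log_factorial_bounds n hn).2
  have hcastnm : ((n+m : ℕ) : ℝ) = N + M := by push_cast; ring
  rw [hcastnm] at I1
  -- tangent
  have I4 := tangent_bound N M x hN0 hM0 h1
  have I5 : (x-M)*(Real.log (N+M) - Real.log M) ≤ Real.log (N+M) - Real.log M := by
    have hlog : 0 ≤ Real.log (N+M) - Real.log M := by
      have := Real.log_le_log hM0 (by linarith : M ≤ N + M)
      linarith
    nlinarith
  have I6 := cube_ineq N M hN1 hM1
  have I7 : Real.log (N+M+1) - Real.log (M+1) ≤ Real.log (N+x) - Real.log x := by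
    rw [← Real.log_div (by positivity) (by positivity), ← Real.log_div (by positivity) (by positivity)]
    apply Real.log_le_log (by positivity)
    rw [div_le_div_iff₀ (by positivity) hx0]
    nlinarith
  have I9 : 1/(12*M) + 1/(12*N) ≤ 1/6 := by
    have h1' : 1/(12*M) ≤ 1/12 := by
      rw [div_le_div_iff₀ (by positivity) (by norm_num)]; linarith
    have h2' : 1/(12*N) ≤ 1/12 := by
      rw [div_le_div_iff₀ (by positivity) (by norm_num)]; linarith
    linarith
  -- expand the 2π logs
  have E1 : Real.log (2*π*(N+M)) = Real.log (2*π) + Real.log (N+M) := by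
    rw [Real.log_mul (by positivity) (by positivity)]
  have E2 : Real.log (2*π*M) = Real.log (2*π) + Real.log M := by
    rw [Real.log_mul (by positivity) (by positivity)]
  have E3 : Real.log (2*π*N) = Real.log (2*π) + Real.log N := by
    rw [Real.log_mul (by positivity) (by positivity)]
  rw [hchoose, E3]
  rw [E1] at I1
  rw [E2] at I2
  rw [E3] at I3
  linarith

theorem prob_sum_eq
    {Omega : Type*} [MeasurableSpace Omega] (P : Measure Omega) [IsProbabilityMeasure P]
    (p : ℝ) (n : ℕ)
    (X : Fin n → Omega → ℕ)
    (hmeas : ∀ i, Measurable (X i))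
    (hindep : iIndepFun X P)
    (hdist : ∀ i k, P {omega | X i omega = k} = ENNReal.ofReal (p * (1 - p) ^ k))
    (hp0 : 0 ≤ p) (hp1 : p ≤ 1) (k : ℕ) :
    P {omega | ∑ i, X i omega = k}
      = (Finset.Nat.antidiagonalTuple n k).card * ENNReal.ofReal (p^n * (1-p)^k) := by
  classical
  set T := Finset.Nat.antidiagonalTuple n k with hT
  have hset : {omega | ∑ i, X i omega = k} = ⋃ a ∈ T, ⋂ i, X i ⁻¹' {a i} := by
    ext ω
    simp only [Set.mem_setOf_eq, Set.mem_iUnion, Set.mem_iInter, Set.mem_preimage,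
      Set.mem_singleton_iff]
    constructor
    · intro h
      exact ⟨fun i => X i ω, Finset.Nat.mem_antidiagonalTuple.2 h, fun i => rfl⟩
    · rintro ⟨a, ha, haeq⟩
      have : ∀ i, X i ω = a i := haeq
      rw [Finset.sum_congr rfl (fun i _ => this i)]
      exact Finset.Nat.mem_antidiagonalTuple.1 ha
  have hmeasE : ∀ a : Fin n → ℕ, MeasurableSet (⋂ i, X i ⁻¹' {a i}) :=
    fun a => MeasurableSet.iInter fun i => (hmeas i) (measurableSet_singleton (a i))
  have hdisj : (T : Set (Fin n → ℕ)).PairwiseDisjoint (fun a => ⋂ i, X i ⁻¹' {a i}) := by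
    intro a _ b _ hab
    refine Set.disjoint_left.2 fun ω hωa hωb => hab ?_
    funext i
    have h1 : X i ω = a i := by
      simpa using Set.mem_iInter.1 hωa i
    have h2 : X i ω = b i := by
      simpa using Set.mem_iInter.1 hωb i
    rw [← h1, h2]
  rw [hset, measure_biUnion_finset hdisj (fun a _ => hmeasE a)]
  have hterm : ∀ a ∈ T, P (⋂ i, X i ⁻¹' {a i}) = ENNReal.ofReal (p^n * (1-p)^k) := by
    intro a ha
    have hprod := hindep.meas_iInter (s := fun i => X i ⁻¹' {a i})
      (fun i => ⟨{a i}, measurableSet_singleton (a i), rfl⟩)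
    rw [hprod]
    have hone : ∀ i, P (X i ⁻¹' {a i}) = ENNReal.ofReal (p * (1-p)^(a i)) := by
      intro i
      rw [show X i ⁻¹' {a i} = {omega | X i omega = a i} from rfl]
      exact hdist i (a i)
    rw [Finset.prod_congr rfl (fun i _ => hone i)]
    rw [← ENNReal.ofReal_prod_of_nonneg (fun i _ => mul_nonneg hp0 (pow_nonneg (by linarith) _))]
    congr 1
    rw [Finset.prod_mul_distrib, Finset.prod_const, Finset.prod_pow_eq_pow_sum,
      Finset.Nat.mem_antidiagonalTuple.1 ha, Finset.card_univ, Fintype.card_fin]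
  rw [Finset.sum_congr rfl hterm, Finset.sum_const, nsmul_eq_mul]

theorem stars_sum (n m : ℕ) (hn : 1 ≤ n) :
    ∑ k ∈ Finset.range (m+1), (Finset.Nat.antidiagonalTuple n k).card = (n+m).choose m := by
  obtain ⟨n', rfl⟩ : ∃ n', n = n' + 1 := ⟨n - 1, by omega⟩
  have e1 : ∀ k ∈ Finset.range (m+1), (Finset.Nat.antidiagonalTuple (n'+1) k).card
      = (k + n').choose n' := by
    intro k _
    rw [adt_card, add_comm n' k, Nat.choose_symm_add]
  rw [Finset.sum_congr rfl e1, Nat.sum_range_add_choose]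
  rw [show m + n' + 1 = (n' + 1) + m by omega, Nat.choose_symm_add]

theorem prob_tail_ge
    {Omega : Type*} [MeasurableSpace Omega] (P : Measure Omega) [IsProbabilityMeasure P]
    (p : ℝ) (n : ℕ)
    (X : Fin n → Omega → ℕ)
    (hmeas : ∀ i, Measurable (X i))
    (hindep : iIndepFun X P)
    (hdist : ∀ i k, P {omega | X i omega = k} = ENNReal.ofReal (p * (1 - p) ^ k))
    (hp0 : 0 ≤ p) (hp1 : p ≤ 1) (hn : 1 ≤ n) (m : ℕ) :
    ENNReal.ofReal (((n+m).choose m : ℝ) * (p^n * (1-p)^m))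
      ≤ P {omega | ∑ i, X i omega ≤ m} := by
  classical
  have hsub : (⋃ k ∈ Finset.range (m+1), {omega | ∑ i, X i omega = k})
      ⊆ {omega | ∑ i, X i omega ≤ m} := by
    intro ω hω
    simp only [Set.mem_iUnion, Finset.mem_range] at hω
    obtain ⟨k, hk, hke⟩ := hω
    exact le_trans (le_of_eq hke) (by omega)
  have hmS : Measurable fun ω => ∑ i, X i ω := Finset.measurable_sum _ (fun i _ => hmeas i)
  have hdisj : (↑(Finset.range (m+1)) : Set ℕ).PairwiseDisjoint
      (fun k => {omega | ∑ i, X i omega = k}) := by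
    intro a _ b _ hab
    refine Set.disjoint_left.2 fun ω hωa hωb => hab ?_
    rw [← hωa, ← hωb]
  have hunion : P (⋃ k ∈ Finset.range (m+1), {omega | ∑ i, X i omega = k})
      = ∑ k ∈ Finset.range (m+1), P {omega | ∑ i, X i omega = k} :=
    measure_biUnion_finset hdisj (fun k _ => hmS (measurableSet_singleton k))
  refine le_trans ?_ ((measure_mono hsub).trans' (le_of_eq hunion.symm))
  -- lower bound each term
  have hterm : ∀ k ∈ Finset.range (m+1),
      ((Finset.Nat.antidiagonalTuple n k).card : ENNReal) * ENNReal.ofReal (p^n * (1-p)^m)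
        ≤ P {omega | ∑ i, X i omega = k} := by
    intro k hk
    rw [prob_sum_eq P p n X hmeas hindep hdist hp0 hp1 k]
    apply _root_.mul_le_mul_right
    apply ENNReal.ofReal_le_ofReal
    apply mul_le_mul_of_nonneg_left _ (by positivity)
    have hk' := Finset.mem_range.1 hk
    exact pow_le_pow_of_le_one (by linarith) (by linarith) (by omega : k ≤ m)
  calc ENNReal.ofReal (((n+m).choose m : ℝ) * (p^n * (1-p)^m))
      = (((n+m).choose m : ℕ) : ENNReal) * ENNReal.ofReal (p^n * (1-p)^m) := by
        rw [ENNReal.ofReal_mul (Nat.cast_nonneg _), ENNReal.ofReal_natCast]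
    _ = ∑ k ∈ Finset.range (m+1), ((Finset.Nat.antidiagonalTuple n k).card : ENNReal)
          * ENNReal.ofReal (p^n * (1-p)^m) := by
        rw [← Finset.sum_mul, ← Nat.cast_sum, stars_sum n m hn]
    _ ≤ ∑ k ∈ Finset.range (m+1), P {omega | ∑ i, X i omega = k} :=
        Finset.sum_le_sum hterm

theorem bridge (p : ℝ) (hp : p ∈ Set.Ioo (0 : ℝ) 1)
    (mu : ℝ) (hmu : mu = (1 - p) / p)
    (lam : ℝ) (hlam : lam ∈ Set.Ioo (0 : ℝ) 1)
    (n m : ℕ) (hn : 1 ≤ n) (hm : 1 ≤ m)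
    (hmx : (m:ℝ) ≤ (n:ℝ)*(lam*mu)) (hxm : (n:ℝ)*(lam*mu) ≤ (m:ℝ)+1) :
    Real.exp (-(n : ℝ) * ((mu * lam * Real.log lam - (1 + mu * lam) * Real.log ((1 + mu * lam) / (1 + mu))) + Real.log (2 * Real.pi * n) / (2 * n)
        + (1 / 6 + 3 / 2 * Real.log (1 + 1 / (lam * mu))) / n)) ≤
      ((n+m).choose m : ℝ) * (p^n * (1-p)^m) := by
  obtain ⟨hp0, hp1⟩ := hp
  obtain ⟨hlam0, hlam1⟩ := hlam
  have hq0 : (0:ℝ) < 1 - p := by linarith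
  have hmu0 : 0 < mu := by rw [hmu]; positivity
  have hN0 : (0:ℝ) < n := by exact_mod_cast hn
  have hM0 : (0:ℝ) < m := by exact_mod_cast hm
  have hx0 : (0:ℝ) < (n:ℝ)*(lam*mu) := by positivity
  have hC0 : (0:ℝ) < ((n+m).choose m : ℝ) := by
    exact_mod_cast Nat.choose_pos (by omega : m ≤ n + m)
  have hRHS : (0:ℝ) < ((n+m).choose m : ℝ) * (p^n * (1-p)^m) := by positivity
  -- log identities
  have h1mu : 1 + mu = 1/p := by rw [hmu]; field_simp; ring
  have hlog1 : Real.log lam = Real.log ((n:ℝ)*(lam*mu)) - Real.log (n:ℝ)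
      - (Real.log (1-p) - Real.log p) := by
    rw [Real.log_mul (ne_of_gt hN0) (by positivity), Real.log_mul (ne_of_gt hlam0) (ne_of_gt hmu0),
      hmu, Real.log_div (ne_of_gt hq0) (ne_of_gt hp0)]
    ring
  have hlog2 : Real.log ((1 + mu * lam) / (1 + mu))
      = Real.log ((n:ℝ) + (n:ℝ)*(lam*mu)) - Real.log (n:ℝ) + Real.log p := by
    rw [Real.log_div (by nlinarith) (by rw [h1mu]; positivity), h1mu,
      show (n:ℝ) + (n:ℝ)*(lam*mu) = (n:ℝ)*(1 + mu*lam) by ring,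
      Real.log_mul (ne_of_gt hN0) (by nlinarith), Real.log_div one_ne_zero (ne_of_gt hp0),
      Real.log_one]
    ring
  have hlog3 : Real.log (1 + 1/(lam*mu))
      = Real.log ((n:ℝ) + (n:ℝ)*(lam*mu)) - Real.log ((n:ℝ)*(lam*mu)) := by
    rw [show (1:ℝ) + 1/(lam*mu) = ((n:ℝ) + (n:ℝ)*(lam*mu))/((n:ℝ)*(lam*mu)) by field_simp; ring,
      Real.log_div (by positivity) (by positivity)]
  have hlogRHS : Real.log (((n+m).choose m : ℝ) * (p^n * (1-p)^m))
      = Real.log ((n+m).choose m : ℝ) + (n:ℝ)*Real.log p + (m:ℝ)*Real.log (1-p) := by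
    rw [Real.log_mul (ne_of_gt hC0) (by positivity), Real.log_mul (by positivity) (by positivity),
      Real.log_pow, Real.log_pow]
    ring
  rw [← Real.exp_log hRHS]
  apply Real.exp_le_exp.mpr
  rw [hlogRHS, hlog1, hlog2, hlog3]
  have hKEY := key_ineq n m hn hm ((n:ℝ)*(lam*mu)) hmx hxm
  have hqle : ((n:ℝ)*(lam*mu)) * Real.log (1-p) ≤ (m:ℝ) * Real.log (1-p) := by
    have hlq : Real.log (1-p) ≤ 0 := Real.log_nonpos (by linarith) (by linarith)
    nlinarith
  have hNe : (n:ℝ) ≠ 0 := ne_of_gt hN0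
  have hA : -(n : ℝ) * ((mu * lam * (Real.log ((n:ℝ)*(lam*mu)) - Real.log (n:ℝ)
        - (Real.log (1-p) - Real.log p))
      - (1 + mu * lam) * (Real.log ((n:ℝ) + (n:ℝ)*(lam*mu)) - Real.log (n:ℝ) + Real.log p))
      + Real.log (2 * Real.pi * n) / (2 * n)
      + (1 / 6 + 3 / 2 * (Real.log ((n:ℝ) + (n:ℝ)*(lam*mu)) - Real.log ((n:ℝ)*(lam*mu)))) / n)
      = (((n:ℝ)+(n:ℝ)*(lam*mu))*Real.log ((n:ℝ)+(n:ℝ)*(lam*mu))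
          - ((n:ℝ)*(lam*mu))*Real.log ((n:ℝ)*(lam*mu)) - (n:ℝ)*Real.log (n:ℝ))
        + (n:ℝ)*Real.log p + ((n:ℝ)*(lam*mu))*Real.log (1-p)
        - 1/2*Real.log (2*π*(n:ℝ)) - 1/6
        - 3/2*(Real.log ((n:ℝ)+(n:ℝ)*(lam*mu)) - Real.log ((n:ℝ)*(lam*mu))) := by
    field_simp
    ring
  rw [hA]
  linarith
end AuxGeomTail

theorem geometric_lower_tail_lower_bound
    {Omega : Type*} [MeasurableSpace Omega] (P : Measure Omega) [IsProbabilityMeasure P]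
    (p : ℝ) (hp : p ∈ Set.Ioo (0 : ℝ) 1) (n : ℕ)
    (X : Fin n → Omega → ℕ)
    (hmeas : ∀ i, Measurable (X i))
    (hindep : iIndepFun X P)
    (hdist : ∀ i k, P {omega | X i omega = k} = ENNReal.ofReal (p * (1 - p) ^ k))
    (mu : ℝ) (hmu : mu = (1 - p) / p)
    (lam : ℝ) (hlam : lam ∈ Set.Ioo (0 : ℝ) 1) (hn : 1 / (lam * mu) ≤ (n : ℝ)) :
    Real.exp (-(n : ℝ) * ((mu * lam * Real.log lam - (1 + mu * lam) * Real.log ((1 + mu * lam) / (1 + mu))) + Real.log (2 * Real.pi * n) / (2 * n)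
        + (1 / 6 + 3 / 2 * Real.log (1 + 1 / (lam * mu))) / n)) ≤
      (P {omega | (∑ i, (X i omega : ℝ)) / n ≤ lam * mu}).toReal := by
  obtain ⟨hp0, hp1⟩ := hp
  obtain ⟨hlam0, hlam1⟩ := hlam
  have hmu0 : 0 < mu := by rw [hmu]; have : 0 < 1 - p := by linarith
                           positivity
  have ht0 : 0 < lam * mu := by positivity
  have hx1 : (1:ℝ) ≤ (n:ℝ) * (lam * mu) := by
    rw [div_le_iff₀ ht0] at hn
    linarith
  have hnn : n ≠ 0 := by
    rintro rfl
    simp at hx1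
    linarith
  have hn1 : 1 ≤ n := Nat.one_le_iff_ne_zero.2 hnn
  have hN0 : (0:ℝ) < n := by exact_mod_cast hn1
  set m : ℕ := Nat.floor ((n:ℝ) * (lam * mu)) with hmdef
  have hm1 : 1 ≤ m := Nat.le_floor (by exact_mod_cast hx1)
  have hmx : (m:ℝ) ≤ (n:ℝ) * (lam * mu) := Nat.floor_le (by positivity)
  have hxm : (n:ℝ) * (lam * mu) ≤ (m:ℝ) + 1 := (Nat.lt_floor_add_one _).le
  have hsub : {omega | ∑ i, X i omega ≤ m}
      ⊆ {omega | (∑ i, (X i omega : ℝ)) / n ≤ lam * mu} := by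
    intro ω hω
    simp only [Set.mem_setOf_eq] at hω ⊢
    rw [div_le_iff₀ hN0]
    have hcast : (∑ i, (X i ω : ℝ)) = ((∑ i, X i ω : ℕ) : ℝ) := by push_cast; rfl
    rw [hcast]
    have h1 : ((∑ i, X i ω : ℕ) : ℝ) ≤ (m:ℝ) := by exact_mod_cast hω
    calc ((∑ i, X i ω : ℕ) : ℝ) ≤ (m:ℝ) := h1
      _ ≤ (n:ℝ) * (lam * mu) := hmx
      _ = lam * mu * n := by ring
  have hprob := prob_tail_ge P p n X hmeas hindep hdist hp0.le hp1.le hn1 m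
  have hPle : ENNReal.ofReal (((n+m).choose m : ℝ) * (p^n * (1-p)^m))
      ≤ P {omega | (∑ i, (X i omega : ℝ)) / n ≤ lam * mu} :=
    hprob.trans (measure_mono hsub)
  have hfin : ((n+m).choose m : ℝ) * (p^n * (1-p)^m)
      ≤ (P {omega | (∑ i, (X i omega : ℝ)) / n ≤ lam * mu}).toReal :=
    (ENNReal.ofReal_le_iff_le_toReal (measure_ne_top P _)).1 hPle
  exact (bridge p ⟨hp0, hp1⟩ mu hmu lam ⟨hlam0, hlam1⟩ n m hn1 hm1 hmx hxm).trans hfin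
end

section
/- Let p ∈ (0,1), μ = (1−p)/p, and let X₁,X₂,… be an infinite sequence of independent, identically distributed geometric random variables with Pr[X = k] = p(1−p)^k for k = 0,1,2,…; let X̄ₙ = (X₁+⋯+Xₙ)/n. Then for every fixed λ ∈ (0,1), the limit as n → ∞ of (−ln Pr[X̄ₙ ≤ λμ]) / (n·H(λ,μ)) equals 1, where H(λ,μ) = μλ·ln λ − (1+μλ)·ln((1+μλ)/(1+μ)). -/
open MeasureTheory ProbabilityTheory Real Filter Finset Topology


theorem aux_choose_sum (n : ℕ) : ∀ k, ∑ i ∈ range (k+1), ((n + i - 1).choose i) = (n + k).choose k := by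
  intro k
  induction k with
  | zero => simp
  | succ k ih =>
    rw [Finset.sum_range_succ, ih]
    have h1 : n + (k+1) - 1 = n + k := by omega
    have h2 : n + (k+1) = (n + k) + 1 := by omega
    rw [h1, h2, Nat.choose_succ_succ (n+k) k]

theorem law_sum
    {Omega : Type*} [MeasurableSpace Omega] (P : Measure Omega) [IsProbabilityMeasure P]
    (p : ℝ) (hp : p ∈ Set.Ioo (0 : ℝ) 1) (X : ℕ → Omega → ℕ)
    (hmeas : ∀ i, Measurable (X i))
    (hindep : iIndepFun X P)
    (hdist : ∀ i k, P {omega | X i omega = k} = ENNReal.ofReal (p * (1 - p) ^ k)) :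
    ∀ n k, P {omega | ∑ i ∈ Finset.range n, X i omega = k}
      = ENNReal.ofReal (((n + k - 1).choose k : ℝ) * p ^ n * (1 - p) ^ k) := by
  intro n
  induction n with
  | zero =>
    intro k
    cases k with
    | zero => simp
    | succ k =>
      have h0 : {omega : Omega | ∑ i ∈ Finset.range 0, X i omega = k + 1} = ∅ := by
        ext ω; simp
      rw [h0]
      simp [Nat.choose_eq_zero_of_lt (by omega : k + 1 - 1 < k + 1)]
  | succ n ih =>
    intro k
    set S : Omega → ℕ := ∑ i ∈ Finset.range n, X i with hS
    have hSapp : ∀ ω, S ω = ∑ i ∈ Finset.range n, X i ω := by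
      intro ω; rw [hS]; simp
    have hSmeas : Measurable S := by
      have h : S = fun ω => ∑ i ∈ Finset.range n, X i ω := funext hSapp
      rw [h]
      exact Finset.measurable_sum _ (fun i _ => hmeas i)
    have hind : IndepFun S (X n) P := hindep.indepFun_sum_range_succ hmeas n
    have hsplit : {omega : Omega | ∑ i ∈ Finset.range (n+1), X i omega = k}
        = ⋃ j ∈ Finset.range (k+1), (S ⁻¹' {k - j} ∩ (X n) ⁻¹' {j}) := by
      ext ω
      simp only [Set.mem_setOf_eq, Finset.sum_range_succ, Set.mem_iUnion, Finset.mem_range,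
        Set.mem_inter_iff, Set.mem_preimage, Set.mem_singleton_iff, hSapp]
      constructor
      · intro h
        exact ⟨X n ω, by omega, by omega, rfl⟩
      · rintro ⟨j, hj, h1, h2⟩
        omega
    rw [hsplit, measure_biUnion_finset]
    · have hterm : ∀ j ∈ Finset.range (k+1),
          P (S ⁻¹' {k - j} ∩ (X n) ⁻¹' {j})
            = ENNReal.ofReal ((((n + (k-j) - 1).choose (k-j) : ℝ) * p ^ n * (1-p) ^ (k-j)) * (p * (1-p)^j)) := by
        intro j hj
        rw [hind.measure_inter_preimage_eq_mul _ _ (measurableSet_singleton _) (measurableSet_singleton _)]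
        have hps : (0:ℝ) < p := hp.1
        have hqs : (0:ℝ) < 1 - p := by linarith [hp.2]
        have h1 : P (S ⁻¹' {k - j}) = ENNReal.ofReal (((n + (k-j) - 1).choose (k-j) : ℝ) * p ^ n * (1-p) ^ (k-j)) := by
          have heq : S ⁻¹' {k - j} = {omega : Omega | ∑ i ∈ Finset.range n, X i omega = k - j} := by
            ext ω; simp [hSapp]
          rw [heq, ih (k - j)]
        have h2 : P ((X n) ⁻¹' {j}) = ENNReal.ofReal (p * (1-p)^j) := by
          have heq : (X n) ⁻¹' {j} = {omega : Omega | X n omega = j} := by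
            ext ω; simp
          rw [heq, hdist n j]
        rw [h1, h2, ← ENNReal.ofReal_mul]
        exact mul_nonneg (mul_nonneg (Nat.cast_nonneg _) (pow_nonneg hps.le n)) (pow_nonneg hqs.le _)
      rw [Finset.sum_congr rfl hterm]
      have hnonneg : ∀ j ∈ Finset.range (k+1), 0 ≤ (((n + (k-j) - 1).choose (k-j) : ℝ) * p ^ n * (1-p) ^ (k-j)) * (p * (1-p)^j) := by
        intro j _
        have hps : (0:ℝ) ≤ p := hp.1.le
        have hqs : (0:ℝ) ≤ 1 - p := by linarith [hp.2]
        exact mul_nonneg (mul_nonneg (mul_nonneg (Nat.cast_nonneg _) (pow_nonneg hps n)) (pow_nonneg hqs _)) (mul_nonneg hps (pow_nonneg hqs _))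
      rw [← ENNReal.ofReal_sum_of_nonneg hnonneg]
      congr 1
      have hq : ∀ j ∈ Finset.range (k+1),
          (((n + (k-j) - 1).choose (k-j) : ℝ) * p ^ n * (1-p) ^ (k-j)) * (p * (1-p)^j)
            = ((n + (k-j) - 1).choose (k-j) : ℝ) * (p ^ (n+1) * (1-p) ^ k) := by
        intro j hj
        simp only [Finset.mem_range] at hj
        have : (1-p) ^ (k-j) * (1-p)^j = (1-p)^k := by
          rw [← pow_add]; congr 1; omega
        rw [← this]
        ring
      rw [Finset.sum_congr rfl hq, ← Finset.sum_mul]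
      have hre : ∑ j ∈ Finset.range (k+1), ((n + (k-j) - 1).choose (k-j) : ℝ)
          = ((n + k).choose k : ℝ) := by
        rw [← Nat.cast_sum]
        norm_cast
        calc ∑ j ∈ Finset.range (k+1), (n + (k-j) - 1).choose (k-j)
            = ∑ j ∈ Finset.range (k+1), (n + j - 1).choose j := by
              rw [← Finset.sum_range_reflect]
              apply Finset.sum_congr rfl
              intro j hj
              simp only [Finset.mem_range] at hj
              congr 2 <;> omega
          _ = (n + k).choose k := aux_choose_sum n k
      rw [hre]
      have : n + 1 + k - 1 = n + k := by omega
      rw [this]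
      ring
    · intro j1 hj1 j2 hj2 hne
      apply Set.disjoint_left.mpr
      rintro ω ⟨_, h1⟩ ⟨_, h2⟩
      simp only [Set.mem_preimage, Set.mem_singleton_iff] at h1 h2
      exact hne (h1 ▸ h2 ▸ rfl)
    · intro j _
      exact (hSmeas (measurableSet_singleton _)).inter ((hmeas n) (measurableSet_singleton _))

theorem tail_sum
    {Omega : Type*} [MeasurableSpace Omega] (P : Measure Omega) [IsProbabilityMeasure P]
    (p : ℝ) (hp : p ∈ Set.Ioo (0 : ℝ) 1) (X : ℕ → Omega → ℕ)
    (hmeas : ∀ i, Measurable (X i))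
    (hlaw : ∀ n k, P {omega | ∑ i ∈ Finset.range n, X i omega = k}
      = ENNReal.ofReal (((n + k - 1).choose k : ℝ) * p ^ n * (1 - p) ^ k))
    (n m : ℕ) :
    P {omega | ∑ i ∈ Finset.range n, X i omega ≤ m}
      = ENNReal.ofReal (∑ k ∈ Finset.range (m+1), ((n + k - 1).choose k : ℝ) * p ^ n * (1 - p) ^ k) := by
  have hsplit : {omega : Omega | ∑ i ∈ Finset.range n, X i omega ≤ m}
      = ⋃ k ∈ Finset.range (m+1), {omega : Omega | ∑ i ∈ Finset.range n, X i omega = k} := by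
    ext ω
    simp only [Set.mem_setOf_eq, Set.mem_iUnion, Finset.mem_range]
    constructor
    · intro h; exact ⟨_, by omega, rfl⟩
    · rintro ⟨k, hk, h⟩; omega
  have hSmeas : Measurable (fun ω => ∑ i ∈ Finset.range n, X i ω) :=
    Finset.measurable_sum _ (fun i _ => hmeas i)
  rw [hsplit, measure_biUnion_finset]
  · rw [Finset.sum_congr rfl (fun k _ => hlaw n k)]
    rw [← ENNReal.ofReal_sum_of_nonneg]
    intro k _
    have hps : (0:ℝ) ≤ p := hp.1.le
    have hqs : (0:ℝ) ≤ 1 - p := by linarith [hp.2]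
    exact mul_nonneg (mul_nonneg (Nat.cast_nonneg _) (pow_nonneg hps n)) (pow_nonneg hqs _)
  · intro k1 _ k2 _ hne
    apply Set.disjoint_left.mpr
    intro ω h1 h2
    simp only [Set.mem_setOf_eq] at h1 h2
    exact hne (h1 ▸ h2 ▸ rfl)
  · intro k _
    exact hSmeas (measurableSet_singleton _)

theorem choose_upper (n m : ℕ) (hn : 1 ≤ n) (hm : 1 ≤ m) :
    (((n+m).choose m : ℝ)) * ((m:ℝ)/((n+m:ℕ):ℝ))^m * ((n:ℝ)/((n+m:ℕ):ℝ))^n ≤ 1 := by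
  set N := n + m with hN
  have hN0 : (0:ℝ) < (N:ℝ) := by positivity
  set x : ℝ := (m:ℝ)/(N:ℝ) with hx
  set y : ℝ := (n:ℝ)/(N:ℝ) with hy
  have hx0 : 0 ≤ x := by positivity
  have hy0 : 0 ≤ y := by positivity
  have hxy : x + y = 1 := by
    rw [hx, hy, ← add_div, hN]
    push_cast
    rw [add_comm (n:ℝ)]
    exact div_self (by positivity)
  have hexp : (x + y)^N = ∑ j ∈ range (N+1), x^j * y^(N-j) * (N.choose j) := add_pow x y N
  have hmem : m ∈ range (N+1) := by simp [hN]
  have hle : x^m * y^(N-m) * (N.choose m) ≤ ∑ j ∈ range (N+1), x^j * y^(N-j) * (N.choose j) := by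
    apply Finset.single_le_sum (f := fun j => x^j * y^(N-j) * (N.choose j)) _ hmem
    intro j _
    positivity
  have hnm : N - m = n := by omega
  rw [hnm] at hle
  rw [← hexp, hxy, one_pow] at hle
  calc ((N.choose m : ℝ)) * x^m * y^n = x^m * y^n * (N.choose m) := by ring
    _ ≤ 1 := hle

theorem choose_lower (n m : ℕ) (hn : 1 ≤ n) (hm : 1 ≤ m) :
    1 ≤ (((n+m:ℕ):ℝ)+1) * (((n+m).choose m : ℝ)) * ((m:ℝ)/((n+m:ℕ):ℝ))^m * ((n:ℝ)/((n+m:ℕ):ℝ))^n := by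
  set N := n + m with hN
  have hN0 : (0:ℝ) < (N:ℝ) := by positivity
  set x : ℝ := (m:ℝ)/(N:ℝ) with hx
  set y : ℝ := (n:ℝ)/(N:ℝ) with hy
  have hx0 : 0 ≤ x := by positivity
  have hy0 : 0 ≤ y := by positivity
  have hxy : x + y = 1 := by
    rw [hx, hy, ← add_div, hN]
    push_cast
    rw [add_comm (n:ℝ)]
    exact div_self (by positivity)
  set t : ℕ → ℝ := fun j => (N.choose j : ℝ) * x^j * y^(N-j) with ht
  have ht0 : ∀ j, 0 ≤ t j := by intro j; simp only [ht]; positivity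
  have hratio : ∀ j, j < N → t (j+1) = ((N:ℝ) - j) * x * ((N.choose j : ℝ) * x^j * y^(N-(j+1))) / ((j:ℝ)+1) := by
    intro j hj
    have hid : (N.choose (j+1)) * (j+1) = N.choose j * (N - j) := Nat.choose_succ_right_eq N j
    have hidR : ((N.choose (j+1)):ℝ) * ((j:ℝ)+1) = (N.choose j : ℝ) * ((N:ℝ) - j) := by
      have h2 := congrArg (Nat.cast : ℕ → ℝ) hid
      push_cast [Nat.cast_sub (le_of_lt hj)] at h2
      linarith [h2]
    simp only [ht]
    rw [eq_div_iff (by positivity : ((j:ℝ)+1) ≠ 0)]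
    calc (N.choose (j+1) : ℝ) * x^(j+1) * y^(N-(j+1)) * ((j:ℝ)+1)
        = (((N.choose (j+1)):ℝ) * ((j:ℝ)+1)) * x^(j+1) * y^(N-(j+1)) := by ring
      _ = ((N.choose j : ℝ) * ((N:ℝ) - j)) * x^(j+1) * y^(N-(j+1)) := by rw [hidR]
      _ = ((N:ℝ) - j) * x * ((N.choose j : ℝ) * x^j * y^(N-(j+1))) := by ring
  have htj : ∀ j, j < N → t j = ((j:ℝ)+1) * y * ((N.choose j : ℝ) * x^j * y^(N-(j+1))) / ((j:ℝ)+1) := by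
    intro j hj
    have hys : y^(N-j) = y * y^(N-(j+1)) := by
      have h3 : N - j = (N - (j+1)) + 1 := by omega
      rw [h3, pow_succ]
      ring
    simp only [ht]
    rw [hys, eq_div_iff (by positivity : ((j:ℝ)+1) ≠ 0)]
    ring
  have step_up : ∀ j, j + 1 ≤ m → t j ≤ t (j+1) := by
    intro j hj
    have hjN : j < N := by omega
    have hnat : (j+1) * n ≤ m * (N - j) := Nat.mul_le_mul hj (by omega)
    have hkey : ((j:ℝ)+1) * y ≤ ((N:ℝ) - j) * x := by
      have h4 : (((j+1) * n : ℕ) : ℝ) ≤ ((m * (N - j) : ℕ) : ℝ) := Nat.cast_le.mpr hnat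
      push_cast [Nat.cast_sub (by omega : j ≤ N)] at h4
      rw [hx, hy, mul_div_assoc', mul_div_assoc', div_le_div_iff₀ hN0 hN0]
      nlinarith [hN0]
    rw [htj j hjN, hratio j hjN]
    gcongr ?_ / _
    have hB : (0:ℝ) ≤ (N.choose j : ℝ) * x^j * y^(N-(j+1)) := by positivity
    exact mul_le_mul_of_nonneg_right hkey hB
  have step_dn : ∀ j, m ≤ j → t (j+1) ≤ t j := by
    intro j hj
    by_cases hjN : j < N
    · have hnat : (N - j) * m ≤ n * (j+1) := Nat.mul_le_mul (by omega) (by omega)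
      have hkey : ((N:ℝ) - j) * x ≤ ((j:ℝ)+1) * y := by
        have h4 : (((N - j) * m : ℕ) : ℝ) ≤ ((n * (j+1) : ℕ) : ℝ) := Nat.cast_le.mpr hnat
        push_cast [Nat.cast_sub (by omega : j ≤ N)] at h4
        rw [hx, hy, mul_div_assoc', mul_div_assoc', div_le_div_iff₀ hN0 hN0]
        nlinarith [hN0]
      rw [htj j hjN, hratio j hjN]
      gcongr ?_ / _
      have hB : (0:ℝ) ≤ (N.choose j : ℝ) * x^j * y^(N-(j+1)) := by positivity
      exact mul_le_mul_of_nonneg_right hkey hB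
    · have : N.choose (j+1) = 0 := Nat.choose_eq_zero_of_lt (by omega)
      simp only [ht, this, Nat.cast_zero, zero_mul]
      exact ht0 j
  have up : ∀ d, t (m - d) ≤ t m := by
    intro d
    induction d with
    | zero => simp
    | succ d ih =>
      by_cases h : d + 1 ≤ m
      · have h1 : m - (d+1) + 1 = m - d := by omega
        have h2 := step_up (m - (d+1)) (by omega)
        rw [h1] at h2
        exact le_trans h2 ih
      · have h1 : m - (d+1) = m - d := by omega
        rw [h1]; exact ih
  have dn : ∀ j, m ≤ j → t j ≤ t m := by
    intro j
    induction j with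
    | zero => intro h; have : m = 0 := by omega
              rw [this]
    | succ j ih =>
      intro h
      by_cases h2 : m = j + 1
      · rw [h2]
      · exact le_trans (step_dn j (by omega)) (ih (by omega))
  have hall : ∀ j ∈ range (N+1), t j ≤ t m := by
    intro j _
    by_cases h : j ≤ m
    · have := up (m - j)
      rwa [Nat.sub_sub_self h] at this
    · exact dn j (by omega)
  have hsum : (1:ℝ) ≤ ((N:ℝ)+1) * t m := by
    have h1 : (1:ℝ) = ∑ j ∈ range (N+1), t j := by
      have hexp := add_pow x y N
      rw [hxy, one_pow] at hexp
      rw [hexp]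
      apply Finset.sum_congr rfl
      intro j _
      simp only [ht]; ring
    calc (1:ℝ) = ∑ j ∈ range (N+1), t j := h1
      _ ≤ ∑ _j ∈ range (N+1), t m := Finset.sum_le_sum hall
      _ = ((N:ℝ)+1) * t m := by
          rw [Finset.sum_const, Finset.card_range, nsmul_eq_mul]
          push_cast; ring
  have hnm : N - m = n := by omega
  simp only [ht, hnm] at hsum
  calc (1:ℝ) ≤ ((N:ℝ)+1) * ((N.choose m : ℝ) * x^m * y^n) := hsum
    _ = ((N:ℝ)+1) * (N.choose m : ℝ) * x^m * y^n := by ring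

theorem H_pos (mu : ℝ) (hmu : 0 < mu) (lam : ℝ) (hlam : lam ∈ Set.Ioo (0:ℝ) 1) :
    0 < mu * lam * Real.log lam - (1 + mu * lam) * Real.log ((1 + mu * lam) / (1 + mu)) := by
  obtain ⟨hl0, hl1⟩ := hlam
  set G : ℝ → ℝ := fun x => mu * x * Real.log x - (1 + mu * x) * (Real.log (1 + mu * x) - Real.log (1 + mu)) with hG
  have hpos : ∀ x : ℝ, 0 < x → 0 < 1 + mu * x := by
    intro x hx; nlinarith
  have hderiv : ∀ x : ℝ, 0 < x →
      HasDerivAt G (mu * (Real.log x + Real.log (1 + mu) - Real.log (1 + mu * x))) x := by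
    intro x hx
    have h1x : (0:ℝ) < 1 + mu * x := hpos x hx
    have ha : HasDerivAt (fun y : ℝ => y * Real.log y) (Real.log x + 1) x := by
      have := (hasDerivAt_id' x).mul (Real.hasDerivAt_log hx.ne')
      rw [one_mul, mul_inv_cancel₀ hx.ne'] at this
      exact this
    have ha' : HasDerivAt (fun y : ℝ => mu * y * Real.log y) (mu * (Real.log x + 1)) x := by
      simpa [mul_assoc] using ha.const_mul mu
    have hb : HasDerivAt (fun y : ℝ => 1 + mu * y) mu x := by
      simpa using ((hasDerivAt_id x).const_mul mu).const_add 1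
    have hc : HasDerivAt (fun y : ℝ => Real.log (1 + mu * y)) (mu / (1 + mu * x)) x :=
      hb.log h1x.ne'
    have hd : HasDerivAt (fun y : ℝ => (1 + mu * y) * (Real.log (1 + mu * y) - Real.log (1 + mu)))
        (mu * (Real.log (1 + mu * x) - Real.log (1 + mu)) + (1 + mu * x) * (mu / (1 + mu * x))) x :=
      hb.mul (hc.sub_const _)
    have := ha'.sub hd
    have heq : mu * (Real.log x + 1) - (mu * (Real.log (1 + mu * x) - Real.log (1 + mu)) + (1 + mu * x) * (mu / (1 + mu * x)))
        = mu * (Real.log x + Real.log (1 + mu) - Real.log (1 + mu * x)) := by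
      field_simp
      ring
    rw [heq] at this
    exact this
  have hanti : StrictAntiOn G (Set.Icc lam 1) := by
    apply strictAntiOn_of_deriv_neg (convex_Icc lam 1)
    · intro x hx
      exact (hderiv x (lt_of_lt_of_le hl0 hx.1)).continuousAt.continuousWithinAt
    · intro x hx
      rw [interior_Icc] at hx
      have hx0 : 0 < x := lt_trans hl0 hx.1
      rw [(hderiv x hx0).deriv]
      have h1x : (0:ℝ) < 1 + mu * x := hpos x hx0
      have hlt : Real.log x + Real.log (1 + mu) < Real.log (1 + mu * x) := by
        rw [← Real.log_mul hx0.ne' (by positivity)]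
        apply Real.log_lt_log (by positivity)
        nlinarith [hx.2]
      nlinarith
  have hG1 : G 1 = 0 := by
    simp [hG]
  have hGlam : G lam > 0 := by
    have := hanti (Set.mem_Icc.mpr ⟨le_refl lam, hl1.le⟩) (Set.mem_Icc.mpr ⟨hl1.le, le_refl 1⟩) hl1
    rw [hG1] at this
    linarith
  have hrw : mu * lam * Real.log lam - (1 + mu * lam) * Real.log ((1 + mu * lam) / (1 + mu)) = G lam := by
    rw [hG]
    have h1 : (0:ℝ) < 1 + mu * lam := hpos lam hl0
    rw [Real.log_div h1.ne' (by positivity)]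
  rw [hrw]
  exact hGlam
theorem choose_shift (n m : ℕ) (hn : 1 ≤ n) :
    (n + m - 1).choose m * (n + m) = (n + m).choose m * n := by
  have h1 := Nat.add_one_mul_choose_eq (n + m - 1) (n - 1)
  have h2 : n + m - 1 + 1 = n + m := by omega
  have h3 : n - 1 + 1 = n := by omega
  rw [h2, h3] at h1
  have h4 : (n + m - 1).choose (n - 1) = (n + m - 1).choose m := by
    rw [← Nat.choose_symm (by omega : n - 1 ≤ n + m - 1)]
    congr 1
    omega
  have h5 : (n + m).choose n = (n + m).choose m := by
    rw [← Nat.choose_symm (by omega : n ≤ n + m)]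
    congr 1
    omega
  rw [h4, h5] at h1
  rw [Nat.mul_comm]
  exact h1

theorem w_mono (p : ℝ) (hp : p ∈ Set.Ioo (0:ℝ) 1) (n m : ℕ) (hn : 1 ≤ n)
    (hcond : ∀ k, k < m → ((k:ℝ)+1) ≤ ((n+k:ℕ):ℝ) * (1-p)) :
    ∀ k, k ≤ m → ((n+k-1).choose k : ℝ) * p^n * (1-p)^k ≤ ((n+m-1).choose m : ℝ) * p^n * (1-p)^m := by
  have hq : (0:ℝ) < 1 - p := by linarith [hp.2]
  have hps : (0:ℝ) < p := hp.1
  have step : ∀ k, k < m → ((n+k-1).choose k : ℝ) * p^n * (1-p)^k ≤ ((n+(k+1)-1).choose (k+1) : ℝ) * p^n * (1-p)^(k+1) := by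
    intro k hk
    have h6 : n + (k+1) - 1 = n + k := by omega
    rw [h6]
    have idA : (n+k).choose (k+1) * (k+1) = (n+k).choose k * n := by
      have := Nat.choose_succ_right_eq (n+k) k
      rwa [show n + k - k = n by omega] at this
    have idB : (n + k - 1).choose k * (n + k) = (n + k).choose k * n := choose_shift n k hn
    have idC : (n+k).choose (k+1) * (k+1) = (n + k - 1).choose k * (n + k) := by omega
    have idCR : ((n+k).choose (k+1) : ℝ) * ((k:ℝ)+1) = ((n + k - 1).choose k : ℝ) * ((n+k:ℕ):ℝ) := by
      exact_mod_cast congrArg (Nat.cast : ℕ → ℝ) idC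
    have hk1 : (0:ℝ) < (k:ℝ)+1 := by positivity
    -- w(k+1) = C(n+k-1,k) * ((n+k)/(k+1)) * p^n * q^(k+1)
    have hw1 : ((n+k).choose (k+1) : ℝ) * p^n * (1-p)^(k+1)
        = ((n+k-1).choose k : ℝ) * p^n * (1-p)^k * (((n+k:ℕ):ℝ) * (1-p) / ((k:ℝ)+1)) := by
      rw [pow_succ, mul_div_assoc', eq_div_iff hk1.ne']
      linear_combination (p^n * (1-p)^k * (1-p)) * idCR
    rw [hw1]
    have hcond' := hcond k hk
    have hfac : (1:ℝ) ≤ ((n+k:ℕ):ℝ) * (1-p) / ((k:ℝ)+1) := by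
      rw [le_div_iff₀ hk1]
      linarith
    nlinarith [mul_nonneg (mul_nonneg (Nat.cast_nonneg ((n+k-1).choose k) : (0:ℝ) ≤ _) (pow_nonneg hps.le n)) (pow_nonneg hq.le k)]
  intro k hk
  have key : ∀ d, ((n+(m-d)-1).choose (m-d) : ℝ) * p^n * (1-p)^(m-d) ≤ ((n+m-1).choose m : ℝ) * p^n * (1-p)^m := by
    intro d
    induction d with
    | zero => simp
    | succ d ih =>
      by_cases h : d + 1 ≤ m
      · have h1 : m - (d+1) + 1 = m - d := by omega
        have h2 := step (m - (d+1)) (by omega)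
        rw [h1] at h2
        exact le_trans h2 ih
      · have h1 : m - (d+1) = m - d := by omega
        rw [h1]; exact ih
  have := key (m - k)
  rwa [Nat.sub_sub_self hk] at this

theorem log_div_tendsto_zero (f : ℕ → ℝ) (C : ℝ) (hC : 0 < C)
    (hf : ∀ᶠ n in atTop, 1 ≤ f n ∧ f n ≤ C * n) :
    Tendsto (fun n : ℕ => Real.log (f n) / n) atTop (𝓝 0) := by
  have hlogn : Tendsto (fun n : ℕ => Real.log n / n) atTop (𝓝 0) := by
    have h1 : Tendsto (fun x : ℝ => Real.log x / x) atTop (𝓝 0) :=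
      Real.isLittleO_log_id_atTop.tendsto_div_nhds_zero
    exact h1.comp tendsto_natCast_atTop_atTop
  have hlogC : Tendsto (fun n : ℕ => Real.log C / n) atTop (𝓝 0) := by
    have := tendsto_one_div_atTop_nhds_zero_nat.const_mul (Real.log C)
    simpa [mul_one_div, div_eq_mul_inv] using this
  have hup : Tendsto (fun n : ℕ => Real.log C / n + Real.log n / n) atTop (𝓝 0) := by
    have := hlogC.add hlogn
    simpa using this
  apply tendsto_of_tendsto_of_tendsto_of_le_of_le' tendsto_const_nhds hup
  · filter_upwards [hf, eventually_ge_atTop 1] with n hn hn1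
    have h0 : (0:ℝ) < n := by exact_mod_cast hn1
    exact div_nonneg (Real.log_nonneg hn.1) h0.le
  · filter_upwards [hf, eventually_ge_atTop 1] with n hn hn1
    have h0 : (0:ℝ) < n := by exact_mod_cast hn1
    rw [← add_div]
    have hnum : Real.log (f n) ≤ Real.log C + Real.log (n:ℝ) := by
      rw [← Real.log_mul hC.ne' h0.ne']
      exact Real.log_le_log (by linarith [hn.1]) hn.2
    exact div_le_div_of_nonneg_right hnum h0.le

theorem floor_ratio_tendsto (a : ℝ) (ha : 0 < a) :
    Tendsto (fun n : ℕ => ((⌊(n:ℝ)*a⌋₊ : ℕ) : ℝ)/n) atTop (𝓝 a) := by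
  have hlow : Tendsto (fun n : ℕ => a - 1/(n:ℝ)) atTop (𝓝 a) := by
    have h := (tendsto_const_nhds (x := a) (f := (atTop : Filter ℕ))).sub tendsto_one_div_atTop_nhds_zero_nat
    simpa using h
  apply tendsto_of_tendsto_of_tendsto_of_le_of_le' hlow tendsto_const_nhds
  · filter_upwards [eventually_ge_atTop 1] with n hn1
    have h0 : (0:ℝ) < n := by exact_mod_cast hn1
    have hfl : (n:ℝ)*a - 1 < (⌊(n:ℝ)*a⌋₊ : ℝ) := by
      have := Nat.lt_floor_add_one ((n:ℝ)*a)
      linarith [Nat.sub_one_lt_floor ((n:ℝ)*a)]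
    rw [sub_le_iff_le_add, ← add_div, le_div_iff₀ h0]
    have h2 := Nat.lt_floor_add_one ((n:ℝ)*a)
    have h3 : a * (n:ℝ) = (n:ℝ) * a := mul_comm a (n:ℝ)
    linarith
  · filter_upwards [eventually_ge_atTop 1] with n hn1
    have h0 : (0:ℝ) < n := by exact_mod_cast hn1
    have hfl : (⌊(n:ℝ)*a⌋₊ : ℝ) ≤ (n:ℝ)*a := Nat.floor_le (by positivity)
    rw [div_le_iff₀ h0]
    linarith [hfl]

set_option maxHeartbeats 2000000 in
theorem geometric_lower_tail_asymptotics
    {Omega : Type*} [MeasurableSpace Omega] (P : Measure Omega) [IsProbabilityMeasure P]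
    (p : ℝ) (hp : p ∈ Set.Ioo (0 : ℝ) 1) (X : ℕ → Omega → ℕ)
    (hmeas : ∀ i, Measurable (X i))
    (hindep : iIndepFun X P)
    (hdist : ∀ i k, P {omega | X i omega = k} = ENNReal.ofReal (p * (1 - p) ^ k))
    (mu : ℝ) (hmu : mu = (1 - p) / p)
    (lam : ℝ) (hlam : lam ∈ Set.Ioo (0 : ℝ) 1) :
    Tendsto (fun n : ℕ =>
        -Real.log ((P {omega | (∑ i ∈ Finset.range n, (X i omega : ℝ)) / n ≤ lam * mu}).toReal) /
          ((n : ℝ) * (mu * lam * Real.log lam - (1 + mu * lam) * Real.log ((1 + mu * lam) / (1 + mu)))))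
      atTop (nhds 1) := by
  obtain ⟨hp0, hp1⟩ := hp
  obtain ⟨hl0, hl1⟩ := hlam
  have hq0 : (0:ℝ) < 1 - p := by linarith
  have hmu0 : 0 < mu := by rw [hmu]; positivity
  set a : ℝ := lam * mu with ha_def
  have ha : 0 < a := by positivity
  set H : ℝ := mu * lam * Real.log lam - (1 + mu * lam) * Real.log ((1 + mu * lam) / (1 + mu)) with hH_def
  have hH : 0 < H := H_pos mu hmu0 lam ⟨hl0, hl1⟩
  have hlaw := law_sum P p ⟨hp0, hp1⟩ X hmeas hindep hdist
  set m : ℕ → ℕ := fun n => ⌊(n:ℝ) * a⌋₊ with hm_def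
  set w : ℕ → ℕ → ℝ := fun n k => ((n + k - 1).choose k : ℝ) * p ^ n * (1 - p) ^ k with hw_def
  have hw_nonneg : ∀ n k, 0 ≤ w n k := by
    intro n k
    simp only [hw_def]
    exact mul_nonneg (mul_nonneg (Nat.cast_nonneg _) (pow_nonneg hp0.le n)) (pow_nonneg hq0.le _)
  -- event identification
  have hevent : ∀ n : ℕ, 1 ≤ n →
      {omega : Omega | (∑ i ∈ Finset.range n, (X i omega : ℝ)) / n ≤ lam * mu}
        = {omega : Omega | ∑ i ∈ Finset.range n, X i omega ≤ m n} := by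
    intro n hn
    have h0 : (0:ℝ) < n := by exact_mod_cast hn
    ext ω
    simp only [Set.mem_setOf_eq]
    have hcast : (∑ i ∈ Finset.range n, (X i ω : ℝ)) = ((∑ i ∈ Finset.range n, X i ω : ℕ) : ℝ) := by
      push_cast; ring
    rw [hcast, div_le_iff₀ h0, hm_def]
    rw [Nat.le_floor_iff (by positivity)]
    constructor
    · intro h; calc ((∑ i ∈ Finset.range n, X i ω : ℕ) : ℝ) ≤ lam * mu * n := h
        _ = (n:ℝ) * a := by rw [ha_def]; ring
    · intro h; calc ((∑ i ∈ Finset.range n, X i ω : ℕ) : ℝ) ≤ (n:ℝ) * a := h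
        _ = lam * mu * n := by rw [ha_def]; ring
  -- tail probability as real sum
  have hPT : ∀ n : ℕ, (P {omega : Omega | ∑ i ∈ Finset.range n, X i omega ≤ m n}).toReal
      = ∑ k ∈ Finset.range (m n + 1), w n k := by
    intro n
    rw [tail_sum P p ⟨hp0, hp1⟩ X hmeas hlaw n (m n)]
    rw [ENNReal.toReal_ofReal]
    apply Finset.sum_nonneg
    intro k _
    exact hw_nonneg n k
  -- asymptotic machinery
  set r : ℕ → ℝ := fun n => ((m n : ℕ) : ℝ) / n with hr_def
  set phi : ℝ → ℝ := fun t => t * Real.log (t / (1 + t)) - Real.log (1 + t) - Real.log p - t * Real.log (1 - p) with hphi_def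
  have hr : Tendsto r atTop (𝓝 a) := floor_ratio_tendsto a ha
  have hphicont : ContinuousAt phi a := by
    have h1 : ContinuousAt (fun t : ℝ => t / (1 + t)) a := by
      apply ContinuousAt.div continuousAt_id (continuousAt_const.add continuousAt_id)
      exact (by positivity : (0:ℝ) < 1 + a).ne'
    have h2 : ContinuousAt (fun t : ℝ => Real.log (t / (1 + t))) a := by
      apply ContinuousAt.comp (g := Real.log) _ h1
      apply Real.continuousAt_log
      positivity
    have h3 : ContinuousAt (fun t : ℝ => Real.log (1 + t)) a := by
      apply ContinuousAt.comp (g := Real.log) (f := fun t : ℝ => 1 + t) _ (continuousAt_const.add continuousAt_id)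
      apply Real.continuousAt_log
      positivity
    exact ((continuousAt_id.mul h2).sub h3).sub continuousAt_const |>.sub (continuousAt_id.mul continuousAt_const)
  have hphir : Tendsto (fun n : ℕ => phi (r n)) atTop (𝓝 (phi a)) := hphicont.tendsto.comp hr
  have hphia : phi a = H := by
    have h1a : (0:ℝ) < 1 + a := by positivity
    have hmu1 : 1 + mu = 1 / p := by rw [hmu]; field_simp; ring
    have hloga : Real.log a = Real.log lam + Real.log mu := Real.log_mul (ne_of_gt hl0) (ne_of_gt hmu0)
    have hlogmu : Real.log mu = Real.log (1 - p) - Real.log p := by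
      rw [hmu, Real.log_div (by linarith) (ne_of_gt hp0)]
    have hlog1mu : Real.log (1 + mu) = - Real.log p := by
      rw [hmu1, one_div, Real.log_inv]
    simp only [hphi_def, hH_def]
    rw [Real.log_div (ne_of_gt ha) (ne_of_gt h1a)]
    rw [Real.log_div (by positivity : (1 + mu * lam : ℝ) ≠ 0) (by positivity : (1 + mu : ℝ) ≠ 0)]
    have haml : mu * lam = a := by rw [ha_def]; ring
    rw [haml, hloga, hlogmu, hlog1mu]
    ring
  -- eventual conditions
  have hev_m1 : ∀ᶠ n : ℕ in atTop, 1 ≤ m n := by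
    have h1 : Tendsto (fun n : ℕ => (n:ℝ) * a) atTop atTop :=
      Tendsto.atTop_mul_const ha tendsto_natCast_atTop_atTop
    filter_upwards [h1.eventually_ge_atTop 1] with n hn
    exact Nat.le_floor (by exact_mod_cast hn)
  have hev_lam : ∀ᶠ n : ℕ in atTop, 1 ≤ (n:ℝ) * (1 - lam) := by
    have h1 : Tendsto (fun n : ℕ => (n:ℝ) * (1 - lam)) atTop atTop :=
      Tendsto.atTop_mul_const (by linarith) tendsto_natCast_atTop_atTop
    exact h1.eventually_ge_atTop 1
  -- error term limits
  have e1 : Tendsto (fun n : ℕ => Real.log ((m n : ℝ) + 1) / n) atTop (𝓝 0) := by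
    apply log_div_tendsto_zero _ (a + 1) (by positivity)
    filter_upwards [eventually_ge_atTop 1] with n hn
    have h0 : (1:ℝ) ≤ n := by exact_mod_cast hn
    constructor
    · have : (0:ℝ) ≤ (m n : ℝ) := Nat.cast_nonneg _
      linarith
    · have hfl : (m n : ℝ) ≤ (n:ℝ) * a := Nat.floor_le (by positivity)
      nlinarith
  have e2 : Tendsto (fun n : ℕ => Real.log (((n + m n : ℕ) : ℝ) + 1) / n) atTop (𝓝 0) := by
    apply log_div_tendsto_zero _ (a + 2) (by positivity)
    filter_upwards [eventually_ge_atTop 1] with n hn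
    have h0 : (1:ℝ) ≤ n := by exact_mod_cast hn
    have hcast : ((n + m n : ℕ) : ℝ) = (n:ℝ) + (m n : ℝ) := by push_cast; ring
    constructor
    · rw [hcast]
      have : (0:ℝ) ≤ (m n : ℝ) := Nat.cast_nonneg _
      linarith
    · rw [hcast]
      have hfl : (m n : ℝ) ≤ (n:ℝ) * a := Nat.floor_le (by positivity)
      nlinarith
  -- the key sandwich
  have hsand : ∀ᶠ n : ℕ in atTop,
      phi (r n) / H - (Real.log ((m n : ℝ) + 1) / n) * (1 / H)
        ≤ -Real.log ((P {omega : Omega | (∑ i ∈ Finset.range n, (X i omega : ℝ)) / n ≤ lam * mu}).toReal) / ((n : ℝ) * H)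
      ∧ -Real.log ((P {omega : Omega | (∑ i ∈ Finset.range n, (X i omega : ℝ)) / n ≤ lam * mu}).toReal) / ((n : ℝ) * H)
        ≤ phi (r n) / H + (2 * (Real.log (((n + m n : ℕ) : ℝ) + 1) / n)) * (1 / H) := by
    filter_upwards [eventually_ge_atTop 1, hev_m1, hev_lam] with n hn1 hm1 hlamc
    have h0 : (0:ℝ) < n := by exact_mod_cast hn1
    set mn := m n with hmn
    have hm0 : (0:ℝ) < (mn : ℝ) := by exact_mod_cast hm1
    set Nr : ℝ := ((n + mn : ℕ) : ℝ) with hNr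
    have hNr0 : (0:ℝ) < Nr := by rw [hNr]; positivity
    have hNcast : Nr = (n:ℝ) + (mn:ℝ) := by rw [hNr]; push_cast; ring
    have hfl : (mn : ℝ) ≤ (n:ℝ) * a := Nat.floor_le (by positivity)
    -- rewrite the probability
    rw [hevent n hn1, hPT n]
    -- monotonicity condition
    have hcond : ∀ k, k < mn → ((k:ℝ)+1) ≤ ((n+k:ℕ):ℝ) * (1-p) := by
      intro k hk
      have hkr : (k:ℝ) ≤ (mn:ℝ) - 1 := by
        have : (k:ℕ) + 1 ≤ mn := hk
        have := Nat.cast_le (α := ℝ) |>.mpr this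
        push_cast at this
        linarith
      have hcast2 : ((n+k:ℕ):ℝ) = (n:ℝ) + (k:ℝ) := by push_cast; ring
      rw [hcast2]
      -- k+1 ≤ (n+k)(1-p) ⟺ kp + 1 ≤ n(1-p)
      -- from k ≤ mn - 1 ≤ na - 1 = n·lam·(1-p)/p - 1 and n(1-lam) ≥ 1
      have hmua : mu * p = 1 - p := by rw [hmu]; field_simp
      have hka : (k:ℝ) * p ≤ ((n:ℝ) * a - 1) * p := by
        apply mul_le_mul_of_nonneg_right _ hp0.le
        linarith
      have hap : a * p = lam * (1 - p) := by
        rw [ha_def]; rw [← hmua]; ring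
      -- ⟺ k + 1 ≤ n(1-p) + k(1-p) ⟺ k*p + 1 ≤ n(1-p)
      -- k*p ≤ (na-1)p = n*lam*(1-p) - p, so need n*lam*(1-p) - p + 1 ≤ n*(1-p)
      -- ⟺ 1 - p ≤ n(1-p)(1-lam) ⟸ 1 ≤ n(1-lam)
      have hfin : (n:ℝ) * lam * (1-p) - p + 1 ≤ (n:ℝ) * (1-p) := by
        have h2 : (1:ℝ) * (1-p) ≤ ((n:ℝ) * (1 - lam)) * (1-p) :=
          mul_le_mul_of_nonneg_right hlamc hq0.le
        nlinarith
      nlinarith [hka, hap]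
    have hwm := w_mono p ⟨hp0, hp1⟩ n mn hn1 hcond
    -- positivity of w n mn
    have hC1pos : (0:ℝ) < ((n + mn - 1).choose mn : ℝ) := by
      have : 0 < (n + mn - 1).choose mn := Nat.choose_pos (by omega)
      exact_mod_cast this
    have hwpos : 0 < w n mn := by
      simp only [hw_def]
      positivity
    -- sum bounds
    have hsum_lb : w n mn ≤ ∑ k ∈ Finset.range (mn + 1), w n k := by
      apply Finset.single_le_sum (f := fun k => w n k) (fun k _ => hw_nonneg n k)
      simp
    have hsum_ub : ∑ k ∈ Finset.range (mn + 1), w n k ≤ ((mn:ℝ) + 1) * w n mn := by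
      calc ∑ k ∈ Finset.range (mn + 1), w n k ≤ ∑ _k ∈ Finset.range (mn + 1), w n mn := by
            apply Finset.sum_le_sum
            intro k hk
            simp only [Finset.mem_range] at hk
            exact hwm k (by omega)
        _ = ((mn:ℝ) + 1) * w n mn := by
            rw [Finset.sum_const, Finset.card_range, nsmul_eq_mul]
            push_cast; ring
    have hsumpos : 0 < ∑ k ∈ Finset.range (mn + 1), w n k := lt_of_lt_of_le hwpos hsum_lb
    -- log bounds on the sum
    have hL1 : Real.log (w n mn) ≤ Real.log (∑ k ∈ Finset.range (mn + 1), w n k) :=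
      Real.log_le_log hwpos hsum_lb
    have hL2 : Real.log (∑ k ∈ Finset.range (mn + 1), w n k) ≤ Real.log ((mn:ℝ) + 1) + Real.log (w n mn) := by
      rw [← Real.log_mul (by positivity) (ne_of_gt hwpos)]
      exact Real.log_le_log hsumpos hsum_ub
    -- decompose log (w n mn)
    have hlogw : Real.log (w n mn) = Real.log ((n + mn - 1).choose mn : ℝ) + (n:ℝ) * Real.log p + (mn:ℝ) * Real.log (1 - p) := by
      simp only [hw_def]
      rw [Real.log_mul (by positivity) (by positivity), Real.log_mul (ne_of_gt hC1pos) (by positivity),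
        Real.log_pow, Real.log_pow]
    have hC2pos : (0:ℝ) < ((n + mn).choose mn : ℝ) := by
      have : 0 < (n + mn).choose mn := Nat.choose_pos (by omega)
      exact_mod_cast this
    have hshift : ((n + mn - 1).choose mn : ℝ) * Nr = ((n + mn).choose mn : ℝ) * (n:ℝ) := by
      rw [hNr]
      exact_mod_cast congrArg (Nat.cast : ℕ → ℝ) (choose_shift n mn hn1)
    have hlogC1 : Real.log ((n + mn - 1).choose mn : ℝ)
        = Real.log ((n + mn).choose mn : ℝ) + Real.log (n:ℝ) - Real.log Nr := by
      have := congrArg Real.log hshift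
      rw [Real.log_mul (ne_of_gt hC1pos) (ne_of_gt hNr0),
        Real.log_mul (ne_of_gt hC2pos) (ne_of_gt h0)] at this
      linarith
    -- choose bounds in log form
    have hx0 : (0:ℝ) < (mn:ℝ) / Nr := by positivity
    have hy0 : (0:ℝ) < (n:ℝ) / Nr := by positivity
    have hub := choose_upper n mn hn1 hm1
    have hlb := choose_lower n mn hn1 hm1
    have hlogub : Real.log ((n + mn).choose mn : ℝ) + (mn:ℝ) * Real.log ((mn:ℝ)/Nr) + (n:ℝ) * Real.log ((n:ℝ)/Nr) ≤ 0 := by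
      have h1 : Real.log (((n+mn).choose mn : ℝ) * ((mn:ℝ)/Nr)^mn * ((n:ℝ)/Nr)^n) ≤ 0 := by
        rw [← Real.log_one]
        apply Real.log_le_log (by positivity)
        rw [hNr]
        exact hub
      rw [Real.log_mul (by positivity) (by positivity), Real.log_mul (ne_of_gt hC2pos) (by positivity),
        Real.log_pow, Real.log_pow] at h1
      push_cast at h1
      linarith
    have hloglb : 0 ≤ Real.log (Nr + 1) + Real.log ((n + mn).choose mn : ℝ) + (mn:ℝ) * Real.log ((mn:ℝ)/Nr) + (n:ℝ) * Real.log ((n:ℝ)/Nr) := by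
      have h1 : (0:ℝ) ≤ Real.log ((Nr + 1) * (((n+mn).choose mn : ℝ) * ((mn:ℝ)/Nr)^mn * ((n:ℝ)/Nr)^n)) := by
        rw [← Real.log_one]
        apply Real.log_le_log one_pos
        rw [hNr]
        calc (1:ℝ) ≤ (((n+mn:ℕ):ℝ)+1) * (((n+mn).choose mn : ℝ)) * (((mn:ℝ))/((n+mn:ℕ):ℝ))^mn * (((n:ℝ))/((n+mn:ℕ):ℝ))^n := hlb
          _ = (((n+mn:ℕ):ℝ)+1) * ((((n+mn).choose mn : ℝ)) * (((mn:ℝ))/((n+mn:ℕ):ℝ))^mn * (((n:ℝ))/((n+mn:ℕ):ℝ))^n) := by ring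
      rw [Real.log_mul (by positivity) (by positivity), Real.log_mul (by positivity) (by positivity),
        Real.log_mul (ne_of_gt hC2pos) (by positivity), Real.log_pow, Real.log_pow] at h1
      push_cast at h1
      linarith
    -- c n = n * phi (r n)
    have hcphi : (mn:ℝ) * Real.log ((mn:ℝ)/Nr) + (n:ℝ) * Real.log ((n:ℝ)/Nr)
        - (n:ℝ) * Real.log p - (mn:ℝ) * Real.log (1-p) = (n:ℝ) * phi (r n) := by
      simp only [hphi_def, hr_def, ← hmn]
      have hrr : (mn:ℝ)/(n:ℝ) / (1 + (mn:ℝ)/(n:ℝ)) = (mn:ℝ)/Nr := by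
        rw [hNcast]
        field_simp
      have h1r : 1 + (mn:ℝ)/(n:ℝ) = Nr/(n:ℝ) := by
        rw [hNcast]
        field_simp
      rw [hrr, h1r]
      rw [Real.log_div (ne_of_gt hNr0) (ne_of_gt h0), Real.log_div (ne_of_gt h0) (ne_of_gt hNr0)]
      field_simp
      ring
    -- final bounds on -log sum
    have hlogNn : Real.log (n:ℝ) ≤ Real.log Nr := by
      apply Real.log_le_log h0
      rw [hNcast]; linarith
    have hlogNN1 : Real.log Nr ≤ Real.log (Nr + 1) := by
      apply Real.log_le_log hNr0
      linarith
    have hlogn0 : 0 ≤ Real.log (n:ℝ) := Real.log_nonneg (by exact_mod_cast hn1)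
    have hlogN10 : 0 ≤ Real.log (Nr + 1) := Real.log_nonneg (by linarith)
    set L := Real.log (∑ k ∈ Finset.range (mn + 1), w n k) with hL
    set cn := (mn:ℝ) * Real.log ((mn:ℝ)/Nr) + (n:ℝ) * Real.log ((n:ℝ)/Nr)
        - (n:ℝ) * Real.log p - (mn:ℝ) * Real.log (1-p) with hcn
    have hAlow : cn - Real.log ((mn:ℝ)+1) ≤ -L := by
      -- -L ≥ -log(mn+1) - log w ≥ -log(mn+1) + cn + (log Nr - log n) ≥ cn - log(mn+1)
      have h1 : Real.log (w n mn) ≤ -cn + (Real.log (n:ℝ) - Real.log Nr) := by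
        rw [hlogw, hlogC1, hcn]
        linarith [hlogub]
      have h2 : L ≤ Real.log ((mn:ℝ)+1) + (-cn + (Real.log (n:ℝ) - Real.log Nr)) := by
        linarith [hL2]
      linarith
    have hAup : -L ≤ cn + 2 * Real.log (Nr + 1) := by
      have h1 : -cn - Real.log (Nr+1) + (Real.log (n:ℝ) - Real.log Nr) ≤ Real.log (w n mn) := by
        rw [hlogw, hlogC1, hcn]
        linarith [hloglb]
      have h2 : -cn - Real.log (Nr+1) + (Real.log (n:ℝ) - Real.log Nr) ≤ L := by
        linarith [hL1]
      linarith
    -- divide by n*H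
    have hnH : (0:ℝ) < (n:ℝ) * H := by positivity
    constructor
    · -- lower bound
      have h3 : (cn - Real.log ((mn:ℝ)+1)) / ((n:ℝ)*H) ≤ -L / ((n:ℝ)*H) :=
        div_le_div_of_nonneg_right hAlow hnH.le
      calc phi (r n) / H - (Real.log ((mn : ℝ) + 1) / n) * (1 / H)
          = (cn - Real.log ((mn:ℝ)+1)) / ((n:ℝ)*H) := by
            rw [hcphi]
            field_simp
        _ ≤ -L / ((n:ℝ)*H) := h3
    · have h3 : -L / ((n:ℝ)*H) ≤ (cn + 2 * Real.log (Nr+1)) / ((n:ℝ)*H) :=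
        div_le_div_of_nonneg_right hAup hnH.le
      calc -L / ((n:ℝ)*H) ≤ (cn + 2 * Real.log (Nr+1)) / ((n:ℝ)*H) := h3
        _ = phi (r n) / H + (2 * (Real.log (Nr + 1) / n)) * (1 / H) := by
            rw [hcphi]
            field_simp
  -- limits of bounding sequences
  have hlowlim : Tendsto (fun n : ℕ => phi (r n) / H - (Real.log ((m n : ℝ) + 1) / n) * (1 / H)) atTop (𝓝 1) := by
    have h1 : Tendsto (fun n : ℕ => phi (r n) / H) atTop (𝓝 (phi a / H)) := hphir.div_const H
    have h2 : Tendsto (fun n : ℕ => (Real.log ((m n : ℝ) + 1) / n) * (1 / H)) atTop (𝓝 (0 * (1/H))) :=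
      e1.mul_const (1/H)
    have h3 := h1.sub h2
    have h4 : phi a / H - 0 * (1/H) = 1 := by
      rw [hphia]
      field_simp
      ring
    rwa [h4] at h3
  have huplim : Tendsto (fun n : ℕ => phi (r n) / H + (2 * (Real.log (((n + m n : ℕ) : ℝ) + 1) / n)) * (1 / H)) atTop (𝓝 1) := by
    have h1 : Tendsto (fun n : ℕ => phi (r n) / H) atTop (𝓝 (phi a / H)) := hphir.div_const H
    have h2 : Tendsto (fun n : ℕ => (2 * (Real.log (((n + m n : ℕ) : ℝ) + 1) / n)) * (1 / H)) atTop (𝓝 ((2 * 0) * (1/H))) :=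
      (e2.const_mul 2).mul_const (1/H)
    have h3 := h1.add h2
    have h4 : phi a / H + (2 * 0) * (1/H) = 1 := by
      rw [hphia]
      field_simp
      ring
    rwa [h4] at h3
  exact tendsto_of_tendsto_of_tendsto_of_le_of_le' hlowlim huplim
    (hsand.mono fun n hn => hn.1) (hsand.mono fun n hn => hn.2)
end
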